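/- The interpretation M_P is a fixpoint of T_P, and every fixpoint of T_P is an infinite-valued model of P; in particular M_P is a model of P (for every clause p ← body in P, M_P(p) ≥ M_P(body)). -/

import Mathlib

open Ordinal Set

noncomputable section
attribute [local instance] Classical.propDecidable

namespace IVS

/-- Countable ordinals: ordinals below `ω₁`. -/
abbrev Ord1 := {o : Ordinal.{0} // o < ω₁}

theorem zero_lt_omega1 : (0 : Ordinal) < ω₁ := omega_pos 1

theorem succ_lt_omega1 {o : Ordinal} (h : o < ω₁) : o + 1 < ω₁ := by
  have h' := (Cardinal.isSuccLimit_omega 1).succ_lt h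
  first
  | simpa only [Order.succ_eq_add_one] using h'
  | simpa using h'

/-- zero as a countable ordinal -/
def O0 : Ord1 := ⟨0, zero_lt_omega1⟩

/-- successor on countable ordinals -/
def Ord1.succ (a : Ord1) : Ord1 := ⟨a.1 + 1, succ_lt_omega1 a.2⟩

/-- The truth domain `V`: `F_α < ⋯ < 0 < ⋯ < T_α` realized as a lexicographic sum. -/
abbrev TV := Ord1 ⊕ₗ (Unit ⊕ₗ Ord1ᵒᵈ)

/-- the false value `F_α` -/
def TV.F (a : Ord1) : TV := toLex (Sum.inl a)
/-- the middle value `0` -/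
def TV.Z : TV := toLex (Sum.inr (toLex (Sum.inl ())))
/-- the true value `T_α` -/
def TV.T (a : Ord1) : TV := toLex (Sum.inr (toLex (Sum.inr (OrderDual.toDual a))))

/-- the order of a truth value (`⊤` codes `+∞`, the order of `0`) -/
def ordOf (v : TV) : WithTop Ordinal :=
  match ofLex v with
  | .inl a => (a.1 : Ordinal)
  | .inr b =>
    match ofLex b with
    | .inl _ => ⊤
    | .inr a => ((OrderDual.ofDual a).1 : Ordinal)

/-- negation-as-failure: `¬F_α = T_{α+1}`, `¬T_α = F_{α+1}`, `¬0 = 0`. -/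
def negv (v : TV) : TV :=
  match ofLex v with
  | .inl a => TV.T a.succ
  | .inr b =>
    match ofLex b with
    | .inl _ => TV.Z
    | .inr a => TV.F (OrderDual.ofDual a).succ

/-- Literals of a propositional normal program (atoms are natural numbers). -/
inductive Lit where
  | pos (n : ℕ)
  | neg (n : ℕ)
  | tt
  | ff

/-- A normal program clause: a head atom and a body which is a conjunction of literals. -/
structure Clause where
  head : ℕ
  body : List Lit

/-- A (possibly infinite) propositional normal logic program. -/
abbrev Program := Set Clause

/-- Infinite-valued interpretations. -/
abbrev Interp := ℕ → TV

/-- the interpretation assigning `F₀` to every atom (denoted `∅` in the paper) -/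
def botI : Interp := fun _ => TV.F O0

def evalLit (I : Interp) : Lit → TV
  | .pos n => I n
  | .neg n => negv (I n)
  | .tt => TV.T O0
  | .ff => TV.F O0

/-- value of a body (conjunction evaluated by `min`; empty conjunction is `T₀`) -/
def evalBody (I : Interp) (b : List Lit) : TV :=
  (b.map (evalLit I)).foldr min (TV.T O0)

/-- least upper bound in `V` (well-defined by the lub-existence theorem) -/
def lub (S : Set TV) : TV := if h : ∃ v, IsLUB S v then h.choose else TV.Z

/-- the immediate consequence operator -/
def TP (P : Program) (I : Interp) : Interp :=
  fun p => lub {v | ∃ c ∈ P, c.head = p ∧ evalBody I c.body = v}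

/-- `I` is an (infinite-valued) model of `P` -/
def isModel (P : Program) (I : Interp) : Prop :=
  ∀ c ∈ P, evalBody I c.body ≤ I c.head

/-- the level set `I ∥ v` -/
def level (I : Interp) (v : TV) : Set ℕ := {p | I p = v}

/-- `I =_α J` -/
def eqA (α : Ord1) (I J : Interp) : Prop :=
  ∀ β ≤ α, level I (TV.T β) = level J (TV.T β) ∧ level I (TV.F β) = level J (TV.F β)

/-- `I ⊏_α J` -/
def sqltA (α : Ord1) (I J : Interp) : Prop :=
  (∀ β < α, eqA β I J) ∧
    ((level I (TV.T α) ⊂ level J (TV.T α) ∧ level J (TV.F α) ⊆ level I (TV.F α)) ∨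
     (level I (TV.T α) ⊆ level J (TV.T α) ∧ level J (TV.F α) ⊂ level I (TV.F α)))

/-- `I ⊑_α J` -/
def sqleA (α : Ord1) (I J : Interp) : Prop := eqA α I J ∨ sqltA α I J

/-- `I ⊏_∞ J` -/
def sqltInf (I J : Interp) : Prop := ∃ α : Ord1, sqltA α I J

/-- `I ⊑_∞ J` -/
def sqleInf (I J : Interp) : Prop := I = J ∨ sqltInf I J

/-- the sequence `T_P^n(I)` is an `α`-chain -/
def isChainA (P : Program) (α : Ord1) (I : Interp) : Prop :=
  ∀ n : ℕ, sqleA α ((TP P)^[n] I) ((TP P)^[n + 1] I)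

/-- the interpretation `T_{P,α}^ω(I)` -/
def TPomega (P : Program) (α : Ord1) (I : Interp) : Interp := fun p =>
  if ordOf (I p) < (α.1 : WithTop Ordinal) then I p
  else if ∃ n : ℕ, (TP P)^[n] I p = TV.T α then TV.T α
  else if ∀ n : ℕ, (TP P)^[n] I p = TV.F α then TV.F α
  else TV.F α.succ

/-- `⊔_{β<α} M_β` for a family defined below `α` -/
def sqcupI (α : Ord1) (f : ∀ β : Ordinal, β < α.1 → Interp) : Interp := fun p =>
  if h : ∃ β : Ordinal, ∃ hb : β < α.1, ordOf (f β hb p) = (β : WithTop Ordinal)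
  then f h.choose h.choose_spec.choose p
  else TV.F α

/-- the approximations `M_α` to the minimum model (junk values for `α ≥ ω₁`) -/
def MA (P : Program) (o : Ordinal) : Interp :=
  Ordinal.limitRecOn o
    (TPomega P O0 botI)
    (fun o' ih => if h : o' + 1 < ω₁ then TPomega P ⟨o' + 1, h⟩ ih else ih)
    (fun o' _ ih =>
      if h : o' < ω₁ then TPomega P ⟨o', h⟩ (sqcupI ⟨o', h⟩ ih) else botI)

/-- `M_α` for a countable ordinal `α` -/
def Mα (P : Program) (α : Ord1) : Interp := MA P α.1

/-- the defining property of the depth `δ` of a program -/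
def isDepth (P : Program) (δ : Ord1) : Prop :=
  (level (Mα P δ) (TV.T δ) = ∅ ∧ level (Mα P δ) (TV.F δ) = ∅) ∧
    ∀ β : Ord1, β < δ →
      (level (Mα P β) (TV.T β) ≠ ∅ ∨ level (Mα P β) (TV.F β) ≠ ∅)

/-- the depth of a program -/
def depth (P : Program) : Ord1 :=
  if h : ∃ δ : Ord1, isDepth P δ then h.choose else O0

/-- the minimum model `M_P` -/
def MP (P : Program) : Interp := fun p =>
  if ordOf (Mα P (depth P) p) < ((depth P).1 : WithTop Ordinal)
  then Mα P (depth P) p else TV.Z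

/-- the set of all infinite-valued models of `P` -/
def models (P : Program) : Set Interp := {I | isModel P I}

/-- `M ♯ α`: the part of `M` consisting of values of order `α` -/
def sharp (I : Interp) (α : Ord1) : Set (ℕ × TV) :=
  {pv | I pv.1 = pv.2 ∧ ordOf pv.2 = (α.1 : WithTop Ordinal)}

/-- `⨀^α S = ⋀^α S ∪ ⋁^α S` -/
def odot (α : Ord1) (S : Set Interp) : Set (ℕ × TV) :=
  {pv | (∃ p : ℕ, pv = (p, TV.T α) ∧ ∀ M ∈ S, M p = TV.T α) ∨
        (∃ p : ℕ, pv = (p, TV.F α) ∧ ∃ M ∈ S, M p = TV.F α)}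

/-- the sets `S_α` of the model intersection construction (junk for `α ≥ ω₁`) -/
def SA (P : Program) (o : Ordinal) : Set Interp :=
  Ordinal.limitRecOn o
    {M ∈ models P | sharp M O0 = odot O0 (models P)}
    (fun o' ih =>
      if h : o' + 1 < ω₁ then {M ∈ ih | sharp M ⟨o' + 1, h⟩ = odot ⟨o' + 1, h⟩ ih} else ih)
    (fun o' _ ih =>
      if h : o' < ω₁ then
        {M : Interp | M ∈ (⋂ (b : Ordinal) (hb : b < o'), ih b hb) ∧
          sharp M ⟨o', h⟩ = odot ⟨o', h⟩ (⋂ (b : Ordinal) (hb : b < o'), ih b hb)}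
      else ∅)
/-! ### Basic order lemmas on TV -/

theorem TV.cases (v : TV) : (∃ a, v = TV.F a) ∨ v = TV.Z ∨ ∃ a, v = TV.T a := by
  rcases h : ofLex v with a | b
  · exact Or.inl ⟨a, by rw [TV.F, ← h, toLex_ofLex]⟩
  · rcases hb : ofLex b with u | a
    · refine Or.inr (Or.inl ?_)
      have hb' : b = toLex (Sum.inl ()) := by rw [← hb, toLex_ofLex]
      rw [TV.Z, ← toLex_ofLex v, h, hb']
    · refine Or.inr (Or.inr ⟨OrderDual.ofDual a, ?_⟩)
      have hb' : b = toLex (Sum.inr a) := by rw [← hb, toLex_ofLex]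
      rw [TV.T, ← toLex_ofLex v, h, hb']
      rfl

@[simp] theorem F_le_F {a b : Ord1} : TV.F a ≤ TV.F b ↔ a ≤ b := by
  simp [TV.F, Sum.Lex.toLex_le_toLex]

@[simp] theorem F_lt_F {a b : Ord1} : TV.F a < TV.F b ↔ a < b := by
  simp [TV.F, Sum.Lex.toLex_lt_toLex]

@[simp] theorem T_le_T {a b : Ord1} : TV.T a ≤ TV.T b ↔ b ≤ a := by
  simp [TV.T, Sum.Lex.toLex_le_toLex]

@[simp] theorem T_lt_T {a b : Ord1} : TV.T a < TV.T b ↔ b < a := by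
  simp [TV.T, Sum.Lex.toLex_lt_toLex]

@[simp] theorem F_lt_Z {a : Ord1} : TV.F a < TV.Z := by
  simp [TV.F, TV.Z, Sum.Lex.toLex_lt_toLex]

@[simp] theorem Z_lt_T {a : Ord1} : TV.Z < TV.T a := by
  simp [TV.Z, TV.T, Sum.Lex.toLex_lt_toLex]

@[simp] theorem F_lt_T {a b : Ord1} : TV.F a < TV.T b := by
  simp [TV.F, TV.T, Sum.Lex.toLex_lt_toLex]

@[simp] theorem F_ne_Z {a : Ord1} : TV.F a ≠ TV.Z := ne_of_lt F_lt_Z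
@[simp] theorem Z_ne_F {a : Ord1} : TV.Z ≠ TV.F a := (ne_of_lt F_lt_Z).symm
@[simp] theorem F_ne_T {a b : Ord1} : TV.F a ≠ TV.T b := ne_of_lt F_lt_T
@[simp] theorem T_ne_F {a b : Ord1} : TV.T a ≠ TV.F b := (ne_of_lt F_lt_T).symm
@[simp] theorem Z_ne_T {a : Ord1} : TV.Z ≠ TV.T a := ne_of_lt Z_lt_T
@[simp] theorem T_ne_Z {a : Ord1} : TV.T a ≠ TV.Z := (ne_of_lt Z_lt_T).symm
@[simp] theorem F_le_Z {a : Ord1} : TV.F a ≤ TV.Z := le_of_lt F_lt_Z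
@[simp] theorem Z_le_T {a : Ord1} : TV.Z ≤ TV.T a := le_of_lt Z_lt_T
@[simp] theorem F_le_T {a b : Ord1} : TV.F a ≤ TV.T b := le_of_lt F_lt_T
@[simp] theorem F_inj {a b : Ord1} : TV.F a = TV.F b ↔ a = b := by
  constructor
  · intro h; exact le_antisymm (F_le_F.1 h.le) (F_le_F.1 h.ge)
  · rintro rfl; rfl
@[simp] theorem T_inj {a b : Ord1} : TV.T a = TV.T b ↔ a = b := by
  constructor
  · intro h; exact le_antisymm (T_le_T.1 h.ge) (T_le_T.1 h.le)
  · rintro rfl; rfl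

theorem bot_le' (v : TV) : TV.F O0 ≤ v := by
  rcases TV.cases v with ⟨a, rfl⟩ | rfl | ⟨a, rfl⟩
  · exact F_le_F.2 (by exact Subtype.coe_le_coe.1 zero_le)
  · simp
  · simp

theorem le_top' (v : TV) : v ≤ TV.T O0 := by
  rcases TV.cases v with ⟨a, rfl⟩ | rfl | ⟨a, rfl⟩
  · simp
  · simp
  · exact T_le_T.2 (by exact Subtype.coe_le_coe.1 zero_le)

@[simp] theorem ordOf_F {a : Ord1} : ordOf (TV.F a) = (a.1 : WithTop Ordinal) := rfl
@[simp] theorem ordOf_T {a : Ord1} : ordOf (TV.T a) = (a.1 : WithTop Ordinal) := rfl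
@[simp] theorem ordOf_Z : ordOf TV.Z = ⊤ := rfl

@[simp] theorem negv_F {a : Ord1} : negv (TV.F a) = TV.T a.succ := rfl
@[simp] theorem negv_T {a : Ord1} : negv (TV.T a) = TV.F a.succ := rfl
@[simp] theorem negv_Z : negv TV.Z = TV.Z := rfl
/-! ### ordOf classification -/

theorem ordOf_cases {v : TV} {b : Ordinal} (h : ordOf v = (b : WithTop Ordinal)) :
    ∃ hb : b < ω₁, v = TV.F ⟨b, hb⟩ ∨ v = TV.T ⟨b, hb⟩ := by
  rcases TV.cases v with ⟨a, rfl⟩ | rfl | ⟨a, rfl⟩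
  · have : a.1 = b := by simpa using h
    exact ⟨this ▸ a.2, Or.inl (by cases a; simp_all)⟩
  · simp at h
  · have : a.1 = b := by simpa using h
    exact ⟨this ▸ a.2, Or.inr (by cases a; simp_all)⟩

theorem ordOf_ne_top {v : TV} (h : v ≠ TV.Z) : ordOf v ≠ ⊤ := by
  rcases TV.cases v with ⟨a, rfl⟩ | rfl | ⟨a, rfl⟩
  · exact WithTop.coe_ne_top
  · exact absurd rfl h
  · exact WithTop.coe_ne_top

/-! ### Existence of least upper bounds in TV -/

theorem exists_isLUB (S : Set TV) : ∃ v, IsLUB S v := by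
  by_cases hT : ∃ a : Ord1, TV.T a ∈ S
  · -- least T-index
    set A : Set Ordinal := {o | ∃ h : o < ω₁, TV.T ⟨o, h⟩ ∈ S} with hA
    obtain ⟨a, ha⟩ := hT
    have hAne : A.Nonempty := ⟨a.1, a.2, by cases a; exact ha⟩
    have hmem : sInf A ∈ A := csInf_mem hAne
    obtain ⟨hlt, hTmem⟩ := hmem
    refine ⟨TV.T ⟨sInf A, hlt⟩, ⟨?_, fun b hb => hb hTmem⟩⟩
    intro v hv
    rcases TV.cases v with ⟨c, rfl⟩ | rfl | ⟨c, rfl⟩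
    · simp
    · simp
    · exact T_le_T.2 (Subtype.mk_le_mk.2 (csInf_le' ⟨c.2, by cases c; exact hv⟩))
  · by_cases hZ : TV.Z ∈ S
    · refine ⟨TV.Z, ⟨?_, fun b hb => hb hZ⟩⟩
      intro v hv
      rcases TV.cases v with ⟨c, rfl⟩ | rfl | ⟨c, rfl⟩
      · simp
      · exact le_rfl
      · exact absurd ⟨c, hv⟩ hT
    · -- S consists of F-values only
      set A : Set Ordinal := {o | ∃ h : o < ω₁, TV.F ⟨o, h⟩ ∈ S} with hA
      have hSF : ∀ v ∈ S, ∃ a : Ord1, v = TV.F a ∧ a.1 ∈ A := by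
        intro v hv
        rcases TV.cases v with ⟨c, rfl⟩ | rfl | ⟨c, rfl⟩
        · exact ⟨c, rfl, c.2, by cases c; exact hv⟩
        · exact absurd hv hZ
        · exact absurd ⟨c, hv⟩ hT
      rcases eq_empty_or_nonempty S with rfl | hSne
      · exact ⟨TV.F O0, by simp [IsLUB, IsLeast, upperBounds, lowerBounds, bot_le']⟩
      · have hAne : A.Nonempty := by
          obtain ⟨v, hv⟩ := hSne
          obtain ⟨a, rfl, haA⟩ := hSF v hv
          exact ⟨a.1, haA⟩
        have hAbdd : BddAbove A := ⟨ω₁, fun o ho => ho.1.le⟩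
        by_cases hs : sSup A < ω₁
        · refine ⟨TV.F ⟨sSup A, hs⟩, ⟨?_, ?_⟩⟩
          · intro v hv
            obtain ⟨a, rfl, haA⟩ := hSF v hv
            exact F_le_F.2 (Subtype.mk_le_mk.2 (le_csSup hAbdd haA))
          · intro b hb
            rcases TV.cases b with ⟨c, rfl⟩ | rfl | ⟨c, rfl⟩
            · refine F_le_F.2 (Subtype.mk_le_mk.2 (csSup_le hAne ?_))
              intro o ho
              have := hb (a := TV.F ⟨o, ho.1⟩) ho.2
              exact Subtype.mk_le_mk.1 (F_le_F.1 this)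
            · simp
            · simp
        · refine ⟨TV.Z, ⟨?_, ?_⟩⟩
          · intro v hv
            obtain ⟨a, rfl, _⟩ := hSF v hv
            simp
          · intro b hb
            rcases TV.cases b with ⟨c, rfl⟩ | rfl | ⟨c, rfl⟩
            · exfalso
              apply hs
              refine lt_of_le_of_lt (csSup_le hAne ?_) c.2
              intro o ho
              have := hb (a := TV.F ⟨o, ho.1⟩) ho.2
              exact Subtype.mk_le_mk.1 (F_le_F.1 this)
            · exact le_rfl
            · simp

theorem isLUB_lub (S : Set TV) : IsLUB S (lub S) := by
  rw [lub, dif_pos (exists_isLUB S)]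
  exact (exists_isLUB S).choose_spec

theorem lub_eq {S : Set TV} {v : TV} (h : IsLUB S v) : lub S = v :=
  (isLUB_lub S).unique h

theorem le_lub {S : Set TV} {v : TV} (h : v ∈ S) : v ≤ lub S :=
  (isLUB_lub S).1 h

theorem lub_le {S : Set TV} {v : TV} (h : ∀ w ∈ S, w ≤ v) : lub S ≤ v :=
  (isLUB_lub S).2 h

/-- If the lub is a T-value it is attained. -/
theorem lub_T_mem {S : Set TV} {a : Ord1} (h : lub S = TV.T a) : TV.T a ∈ S := by
  by_contra hmem
  have hub : ∀ v ∈ S, v ≤ TV.T a.succ := by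
    intro v hv
    have hvle : v ≤ TV.T a := h ▸ le_lub hv
    have hne : v ≠ TV.T a := fun e => hmem (e ▸ hv)
    rcases TV.cases v with ⟨c, rfl⟩ | rfl | ⟨c, rfl⟩
    · simp
    · simp
    · refine T_le_T.2 (Subtype.mk_le_mk.2 ?_)
      have : a < c := lt_of_le_of_ne (T_le_T.1 hvle) (fun e => hne (by rw [e]))
      exact Order.add_one_le_of_lt (Subtype.mk_lt_mk.1 this)
  have := h ▸ lub_le hub
  have := T_le_T.1 this
  exact absurd (Subtype.mk_le_mk.1 this) (by simp [Ord1.succ])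
/-! ### evalBody and TP basics -/

theorem TV.min_cases' (u v : TV) : min u v = u ∨ min u v = v := by
  rcases le_total u v with h | h
  · exact Or.inl (inf_eq_left.2 h)
  · exact Or.inr (inf_eq_right.2 h)
theorem TV.min_le_left' (u v : TV) : min u v ≤ u := inf_le_left
theorem TV.min_le_right' (u v : TV) : min u v ≤ v := inf_le_right
theorem TV.le_min' {u v w : TV} (h1 : w ≤ u) (h2 : w ≤ v) : w ≤ min u v := le_inf h1 h2
theorem TV.lt_min' {u v w : TV} (h1 : w < u) (h2 : w < v) : w < min u v := by
  rcases TV.min_cases' u v with e | e <;> rw [e] <;> assumption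
theorem TV.min_eq_left' {u v : TV} (h : u ≤ v) : min u v = u := inf_eq_left.2 h
theorem TV.min_eq_right' {u v : TV} (h : v ≤ u) : min u v = v := inf_eq_right.2 h

@[simp] theorem evalBody_nil (I : Interp) : evalBody I [] = TV.T O0 := rfl
@[simp] theorem evalBody_cons (I : Interp) (l : Lit) (b : List Lit) :
    evalBody I (l :: b) = min (evalLit I l) (evalBody I b) := rfl

theorem evalBody_le_lit {I : Interp} {b : List Lit} {l : Lit} (h : l ∈ b) :
    evalBody I b ≤ evalLit I l := by
  induction b with
  | nil => cases h
  | cons l' b ih =>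
    rw [evalBody_cons]
    rcases List.mem_cons.1 h with rfl | h
    · exact TV.min_le_left' _ _
    · exact le_trans (TV.min_le_right' _ _) (ih h)

theorem le_evalBody {I : Interp} {b : List Lit} {v : TV}
    (h : ∀ l ∈ b, v ≤ evalLit I l) : v ≤ evalBody I b := by
  induction b with
  | nil => exact le_top' v
  | cons l' b ih =>
    rw [evalBody_cons]
    exact TV.le_min' (h l' (by simp)) (ih fun l hl => h l (by simp [hl]))

theorem lt_evalBody {I : Interp} {b : List Lit} {v : TV}
    (hv : v < TV.T O0) (h : ∀ l ∈ b, v < evalLit I l) : v < evalBody I b := by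
  induction b with
  | nil => exact hv
  | cons l' b ih =>
    rw [evalBody_cons]
    exact TV.lt_min' (h l' (by simp)) (ih fun l hl => h l (by simp [hl]))

theorem evalBody_mem {I : Interp} {b : List Lit} :
    evalBody I b = TV.T O0 ∨ ∃ l ∈ b, evalBody I b = evalLit I l := by
  induction b with
  | nil => exact Or.inl rfl
  | cons l' b ih =>
    rw [evalBody_cons]
    rcases TV.min_cases' (evalLit I l') (evalBody I b) with he | he
    · exact Or.inr ⟨l', by simp, he⟩
    · rw [he]
      rcases ih with h | ⟨l, hl, h⟩
      · exact Or.inl h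
      · exact Or.inr ⟨l, by simp [hl], h⟩

theorem TP_def (P : Program) (I : Interp) (p : ℕ) :
    TP P I p = lub {v | ∃ c ∈ P, c.head = p ∧ evalBody I c.body = v} := rfl

theorem le_TP {P : Program} {I : Interp} {c : Clause} (hc : c ∈ P) :
    evalBody I c.body ≤ TP P I c.head := le_lub ⟨c, hc, rfl, rfl⟩

theorem TP_le {P : Program} {I : Interp} {p : ℕ} {v : TV}
    (h : ∀ c ∈ P, c.head = p → evalBody I c.body ≤ v) : TP P I p ≤ v :=
  lub_le (by rintro w ⟨c, hc, hh, rfl⟩; exact h c hc hh)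

theorem TP_eq_T {P : Program} {I : Interp} {p : ℕ} {a : Ord1} (h : TP P I p = TV.T a) :
    ∃ c ∈ P, c.head = p ∧ evalBody I c.body = TV.T a := lub_T_mem h

theorem lt_TP {P : Program} {I : Interp} {p : ℕ} {v : TV} (h : v < TP P I p) :
    ∃ c ∈ P, c.head = p ∧ v < evalBody I c.body := by
  by_contra hcon
  push_neg at hcon
  exact absurd (TP_le hcon) (not_le.2 h)

/-! ### band lemmas -/

theorem ordOf_lt_cases {v : TV} {g : Ordinal} (h : ordOf v < (g : WithTop Ordinal)) :
    ∃ b, ∃ hb : b < ω₁, b < g ∧ (v = TV.F ⟨b, hb⟩ ∨ v = TV.T ⟨b, hb⟩) := by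
  have hne : ordOf v ≠ ⊤ := fun e => absurd (e ▸ h) (by simp)
  obtain ⟨b, hb⟩ := WithTop.ne_top_iff_exists.1 hne
  obtain ⟨hb1, hb2⟩ := ordOf_cases hb.symm
  exact ⟨b, hb1, WithTop.coe_lt_coe.1 (hb ▸ h), hb2⟩

theorem band_F_le {g : Ord1} {v : TV} (h : (g.1 : WithTop Ordinal) ≤ ordOf v) :
    TV.F g ≤ v := by
  rcases TV.cases v with ⟨a, rfl⟩ | rfl | ⟨a, rfl⟩
  · exact F_le_F.2 (Subtype.mk_le_mk.2 (by exact_mod_cast (by simpa using h)))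
  · simp
  · simp

theorem band_le_T {g : Ord1} {v : TV} (h : (g.1 : WithTop Ordinal) ≤ ordOf v) :
    v ≤ TV.T g := by
  rcases TV.cases v with ⟨a, rfl⟩ | rfl | ⟨a, rfl⟩
  · simp
  · simp
  · exact T_le_T.2 (Subtype.mk_le_mk.2 (by exact_mod_cast (by simpa using h)))

theorem band_negv {g : Ord1} {v : TV} (h : (g.1 : WithTop Ordinal) ≤ ordOf v) :
    (g.1 : WithTop Ordinal) ≤ ordOf (negv v) := by
  rcases TV.cases v with ⟨a, rfl⟩ | rfl | ⟨a, rfl⟩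
  · simp only [ordOf_F] at h
    simp only [negv_F, ordOf_T, Ord1.succ]
    exact le_trans h (by exact_mod_cast le_of_lt (Order.lt_add_one_iff.2 le_rfl))
  · simp
  · simp only [ordOf_T] at h
    simp only [negv_T, ordOf_F, Ord1.succ]
    exact le_trans h (by exact_mod_cast le_of_lt (Order.lt_add_one_iff.2 le_rfl))

theorem band_min {g : Ord1} {u v : TV} (hu : (g.1 : WithTop Ordinal) ≤ ordOf u)
    (hv : (g.1 : WithTop Ordinal) ≤ ordOf v) :
    (g.1 : WithTop Ordinal) ≤ ordOf (min u v) := by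
  rcases TV.min_cases' u v with h | h
  · rw [h]; exact hu
  · rw [h]; exact hv
/-! ### the band-agreement relation `EqB` -/

def EqB (g : Ordinal) (I J : Interp) : Prop :=
  ∀ q, (ordOf (I q) < (g : WithTop Ordinal) ∨ ordOf (J q) < (g : WithTop Ordinal)) → I q = J q

theorem EqB.symm {g : Ordinal} {I J : Interp} (h : EqB g I J) : EqB g J I :=
  fun q hq => (h q hq.symm).symm

theorem EqB.lit {g : Ord1} {I J : Interp} (h : EqB g.1 I J) (l : Lit) :
    evalLit I l = evalLit J l ∨
      ((g.1 : WithTop Ordinal) ≤ ordOf (evalLit I l) ∧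
       (g.1 : WithTop Ordinal) ≤ ordOf (evalLit J l)) := by
  cases l with
  | pos q =>
    by_cases hq : ordOf (I q) < (g.1 : WithTop Ordinal) ∨ ordOf (J q) < (g.1 : WithTop Ordinal)
    · exact Or.inl (h q hq)
    · push_neg at hq
      exact Or.inr ⟨hq.1, hq.2⟩
  | neg q =>
    by_cases hq : ordOf (I q) < (g.1 : WithTop Ordinal) ∨ ordOf (J q) < (g.1 : WithTop Ordinal)
    · exact Or.inl (by rw [evalLit, evalLit, h q hq])
    · push_neg at hq
      exact Or.inr ⟨band_negv hq.1, band_negv hq.2⟩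
  | tt => exact Or.inl rfl
  | ff => exact Or.inl rfl

theorem EqB.body {g : Ord1} {I J : Interp} (h : EqB g.1 I J) (b : List Lit) :
    evalBody I b = evalBody J b ∨
      ((g.1 : WithTop Ordinal) ≤ ordOf (evalBody I b) ∧
       (g.1 : WithTop Ordinal) ≤ ordOf (evalBody J b)) := by
  induction b with
  | nil => exact Or.inl rfl
  | cons l b ih =>
    rw [evalBody_cons, evalBody_cons]
    rcases h.lit l with hl | ⟨hl1, hl2⟩
    · rcases ih with hb | ⟨hb1, hb2⟩
      · exact Or.inl (by rw [hl, hb])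
      · -- literal values equal, bodies in band
        by_cases hu : (g.1 : WithTop Ordinal) ≤ ordOf (evalLit I l)
        · exact Or.inr ⟨band_min hu hb1, band_min (hl ▸ hu) hb2⟩
        · obtain ⟨c, hc, hcg, hcase⟩ := ordOf_lt_cases (not_le.1 hu)
          rcases hcase with he | he
          · -- F-value below the band: it is the min on both sides
            have hFlt : TV.F ⟨c, hc⟩ < TV.F g := F_lt_F.2 (Subtype.mk_lt_mk.2 hcg)
            have h1 : evalLit I l ≤ evalBody I b := by
              rw [he]; exact le_of_lt (lt_of_lt_of_le hFlt (band_F_le hb1))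
            have h2 : evalLit J l ≤ evalBody J b := by
              rw [← hl, he]; exact le_of_lt (lt_of_lt_of_le hFlt (band_F_le hb2))
            rw [TV.min_eq_left' h1, TV.min_eq_left' h2]
            exact Or.inl hl
          · -- T-value above the band: bodies are the min on both sides
            have hTlt : TV.T g < TV.T ⟨c, hc⟩ := T_lt_T.2 (Subtype.mk_lt_mk.2 hcg)
            have h1 : evalBody I b ≤ evalLit I l := by
              rw [he]; exact le_of_lt (lt_of_le_of_lt (band_le_T hb1) hTlt)
            have h2 : evalBody J b ≤ evalLit J l := by
              rw [← hl, he]; exact le_of_lt (lt_of_le_of_lt (band_le_T hb2) hTlt)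
            rw [TV.min_eq_right' h1, TV.min_eq_right' h2]
            exact Or.inr ⟨hb1, hb2⟩
    · rcases ih with hb | ⟨hb1, hb2⟩
      · by_cases hu : (g.1 : WithTop Ordinal) ≤ ordOf (evalBody I b)
        · exact Or.inr ⟨band_min hl1 hu, band_min hl2 (hb ▸ hu)⟩
        · obtain ⟨c, hc, hcg, hcase⟩ := ordOf_lt_cases (not_le.1 hu)
          rcases hcase with he | he
          · have hFlt : TV.F ⟨c, hc⟩ < TV.F g := F_lt_F.2 (Subtype.mk_lt_mk.2 hcg)
            have h1 : evalBody I b ≤ evalLit I l := by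
              rw [he]; exact le_of_lt (lt_of_lt_of_le hFlt (band_F_le hl1))
            have h2 : evalBody J b ≤ evalLit J l := by
              rw [← hb, he]; exact le_of_lt (lt_of_lt_of_le hFlt (band_F_le hl2))
            rw [TV.min_eq_right' h1, TV.min_eq_right' h2]
            exact Or.inl hb
          · have hTlt : TV.T g < TV.T ⟨c, hc⟩ := T_lt_T.2 (Subtype.mk_lt_mk.2 hcg)
            have h1 : evalLit I l ≤ evalBody I b := by
              rw [he]; exact le_of_lt (lt_of_le_of_lt (band_le_T hl1) hTlt)
            have h2 : evalLit J l ≤ evalBody J b := by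
              rw [← hb, he]; exact le_of_lt (lt_of_le_of_lt (band_le_T hl2) hTlt)
            rw [TV.min_eq_left' h1, TV.min_eq_left' h2]
            exact Or.inr ⟨hl1, hl2⟩
      · exact Or.inr ⟨band_min hl1 hb1, band_min hl2 hb2⟩

theorem EqB.TP_aux {g : Ord1} {P : Program} {I J : Interp} (h : EqB g.1 I J) (p : ℕ)
    (hu : ordOf (TP P I p) < (g.1 : WithTop Ordinal)) : TP P I p = TP P J p := by
  obtain ⟨b, hb, hbg, hcase⟩ := ordOf_lt_cases hu
  rcases hcase with he | he
  · -- the lub is an F-value strictly below the band: all bodies agree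
    have hagree : ∀ c ∈ P, c.head = p → evalBody I c.body = evalBody J c.body := by
      intro c hc hh
      rcases h.body c.body with hb' | ⟨hb1, _⟩
      · exact hb'
      · exfalso
        have h1 : evalBody I c.body ≤ TV.F ⟨b, hb⟩ := by
          have := le_TP (I := I) hc; rw [hh, he] at this; exact this
        have h2 := le_trans (band_F_le hb1) h1
        exact absurd (Subtype.mk_le_mk.1 (F_le_F.1 h2)) (not_le.2 hbg)
    rw [TP_def, TP_def]
    congr 1
    ext v
    constructor
    · rintro ⟨c, hc, hh, rfl⟩; exact ⟨c, hc, hh, (hagree c hc hh).symm⟩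
    · rintro ⟨c, hc, hh, rfl⟩; exact ⟨c, hc, hh, hagree c hc hh⟩
  · -- the lub is a T-value above the band: it is attained, by a body that agrees
    obtain ⟨c, hc, hh, hbody⟩ := TP_eq_T he
    have hbody' : evalBody J c.body = TV.T ⟨b, hb⟩ := by
      rcases h.body c.body with hb' | ⟨hb1, _⟩
      · exact hb' ▸ hbody
      · exfalso
        rw [hbody] at hb1
        exact absurd (by simpa using hb1) (not_le.2 hbg)
    rw [he]
    refine (le_antisymm ?_ ?_).symm
    · refine TP_le ?_
      intro c' hc' hh'
      rcases h.body c'.body with hb' | ⟨_, hb2⟩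
      · rw [← hb']
        have := le_TP (I := I) hc'; rw [hh', he] at this; exact this
      · exact le_trans (band_le_T hb2) (le_of_lt (T_lt_T.2 (Subtype.mk_lt_mk.2 hbg)))
    · have := le_TP (I := J) hc; rw [hh, hbody'] at this; exact this

theorem EqB.TP {g : Ord1} {P : Program} {I J : Interp} (h : EqB g.1 I J) :
    EqB g.1 (TP P I) (TP P J) := by
  intro p hp
  rcases hp with hp | hp
  · exact h.TP_aux p hp
  · exact (h.symm.TP_aux p hp).symm
/-! ### the stage ordering `Prec` and monotonicity of `TP` -/

theorem T_le_cases {g : Ord1} {v : TV} (h : TV.T g ≤ v) : ∃ c, v = TV.T c ∧ c ≤ g := by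
  rcases TV.cases v with ⟨a, rfl⟩ | rfl | ⟨a, rfl⟩
  · exact absurd h (not_le.2 F_lt_T)
  · exact absurd h (not_le.2 Z_lt_T)
  · exact ⟨a, rfl, T_le_T.1 h⟩

theorem band_negv_gt {g : Ord1} {v : TV} (h : (g.1 : WithTop Ordinal) ≤ ordOf v) :
    TV.F g < negv v := by
  rcases TV.cases v with ⟨a, rfl⟩ | rfl | ⟨a, rfl⟩
  · simp
  · simp
  · rw [negv_T]
    refine F_lt_F.2 (Subtype.mk_lt_mk.2 ?_)
    have : g.1 ≤ a.1 := by simpa using h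
    exact lt_of_le_of_lt this (Order.lt_add_one_iff.2 le_rfl)

def Prec (g : Ord1) (I J : Interp) : Prop :=
  EqB g.1 I J ∧ (∀ q, I q = TV.T g → J q = TV.T g) ∧ (∀ q, TV.F g < I q → TV.F g < J q)

theorem Prec.trans {g : Ord1} {I J K : Interp} (h1 : Prec g I J) (h2 : Prec g J K) :
    Prec g I K := by
  refine ⟨?_, fun q hq => h2.2.1 q (h1.2.1 q hq), fun q hq => h2.2.2 q (h1.2.2 q hq)⟩
  intro q hq
  rcases hq with hq | hq
  · have e1 := h1.1 q (Or.inl hq)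
    have e2 := h2.1 q (Or.inl (e1 ▸ hq))
    exact e1.trans e2
  · have e2 := h2.1 q (Or.inr hq)
    have e1 := h1.1 q (Or.inr (e2 ▸ hq))
    exact e1.trans e2

theorem Prec.band_rhs {g : Ord1} {I J : Interp} (h : Prec g I J) {q : ℕ}
    (hq : (g.1 : WithTop Ordinal) ≤ ordOf (I q)) : (g.1 : WithTop Ordinal) ≤ ordOf (J q) := by
  by_contra hc
  have := h.1 q (Or.inr (not_le.1 hc))
  rw [this] at hq
  exact hc (by exact_mod_cast hq)

theorem Prec.litT {g : Ord1} {I J : Interp} (h : Prec g I J) {l : Lit}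
    (hl : TV.T g ≤ evalLit I l) : TV.T g ≤ evalLit J l := by
  cases l with
  | pos q =>
    obtain ⟨c, hc, hcg⟩ := T_le_cases hl
    rcases lt_or_eq_of_le hcg with hlt | rfl
    · have : ordOf (I q) < (g.1 : WithTop Ordinal) := by
        rw [show I q = TV.T c from hc, ordOf_T]
        exact_mod_cast Subtype.coe_lt_coe.2 hlt
      have e := h.1 q (Or.inl this)
      show TV.T g ≤ J q
      rw [← e]; exact hl
    · show TV.T c ≤ J q
      rw [h.2.1 q hc]
  | neg q =>
    have hl' : TV.T g ≤ negv (I q) := hl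
    rcases TV.cases (I q) with ⟨a, ha⟩ | ha | ⟨a, ha⟩
    · -- negv is T (a.succ), with a.succ ≤ g, so a < g and the value is frozen
      have hfroz : ordOf (I q) < (g.1 : WithTop Ordinal) := by
        rw [ha, ordOf_F]
        have h1 : a.succ ≤ g := by
          rw [ha, negv_F] at hl'
          exact T_le_T.1 hl'
        have h2 : a.1 < g.1 := lt_of_lt_of_le (Order.lt_add_one_iff.2 le_rfl) h1
        exact_mod_cast h2
      have e := h.1 q (Or.inl hfroz)
      show TV.T g ≤ negv (J q)
      rw [← e]
      exact hl'
    · exfalso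
      rw [ha, negv_Z] at hl'
      exact absurd hl' (not_le.2 Z_lt_T)
    · exfalso
      rw [ha, negv_T] at hl'
      exact absurd hl' (not_le.2 F_lt_T)
  | tt => exact le_top' _
  | ff => exact absurd hl (not_le.2 F_lt_T)

theorem Prec.litF {g : Ord1} {I J : Interp} (h : Prec g I J) {l : Lit}
    (hl : TV.F g < evalLit I l) : TV.F g < evalLit J l := by
  cases l with
  | pos q => exact h.2.2 q hl
  | neg q =>
    have hl' : TV.F g < negv (I q) := hl
    show TV.F g < negv (J q)
    rcases TV.cases (I q) with ⟨a, ha⟩ | ha | ⟨a, ha⟩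
    · by_cases hag : a.1 < g.1
      · have e := h.1 q (Or.inl (by rw [ha, ordOf_F]; exact_mod_cast hag))
        rw [← e, ha, negv_F]
        simp
      · exact band_negv_gt (h.band_rhs (by rw [ha, ordOf_F]; exact_mod_cast not_lt.1 hag))
    · exact band_negv_gt (h.band_rhs (by rw [ha, ordOf_Z]; exact le_top))
    · have hag : g.1 ≤ a.1 := by
        rw [ha, negv_T] at hl'
        have h2 := Subtype.coe_lt_coe.2 (F_lt_F.1 hl')
        exact Order.lt_add_one_iff.1 (by exact_mod_cast h2)
      exact band_negv_gt (h.band_rhs (by rw [ha, ordOf_T]; exact_mod_cast hag))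
  | tt => exact F_lt_T
  | ff =>
    exfalso
    have := F_lt_F.1 hl
    exact absurd (Subtype.coe_lt_coe.2 this) not_lt_zero

theorem Prec.monoTP {g : Ord1} {P : Program} {I J : Interp} (h : Prec g I J) :
    Prec g (TP P I) (TP P J) := by
  refine ⟨EqB.TP h.1, ?_, ?_⟩
  · intro p hp
    obtain ⟨c, hc, hh, hbody⟩ := TP_eq_T hp
    have hTle : TV.T g ≤ evalBody J c.body :=
      le_evalBody fun l hl => h.litT (hbody ▸ evalBody_le_lit hl)
    have hTle' : TV.T g ≤ TP P J p := le_trans hTle (hh ▸ le_TP hc)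
    obtain ⟨c', hc', hcg⟩ := T_le_cases hTle'
    rcases lt_or_eq_of_le hcg with hlt | rfl
    · exfalso
      have hfroz : ordOf (TP P J p) < (g.1 : WithTop Ordinal) := by
        rw [hc', ordOf_T]; exact_mod_cast Subtype.coe_lt_coe.2 hlt
      have e := (EqB.TP (P := P) h.1) p (Or.inr hfroz)
      rw [hp, hc'] at e
      exact absurd (T_inj.1 e) (ne_of_gt hlt)
    · exact hc'
  · intro p hp
    obtain ⟨c, hc, hh, hbody⟩ := lt_TP hp
    have : TV.F g < evalBody J c.body :=
      lt_evalBody F_lt_T fun l hl => h.litF (lt_of_lt_of_le hbody (evalBody_le_lit hl))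
    exact lt_of_lt_of_le this (hh ▸ le_TP hc)
/-! ### unfolding the approximations `MA` -/

theorem TPomega_low {P : Program} {g : Ord1} {I : Interp} {p : ℕ}
    (h : ordOf (I p) < (g.1 : WithTop Ordinal)) : TPomega P g I p = I p := by
  simp only [TPomega]; rw [if_pos h]

theorem TPomega_T {P : Program} {g : Ord1} {I : Interp} {p : ℕ}
    (h : ¬ ordOf (I p) < (g.1 : WithTop Ordinal)) (hT : ∃ n, (TP P)^[n] I p = TV.T g) :
    TPomega P g I p = TV.T g := by
  simp only [TPomega]; rw [if_neg h, if_pos hT]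

theorem TPomega_F {P : Program} {g : Ord1} {I : Interp} {p : ℕ}
    (h : ¬ ordOf (I p) < (g.1 : WithTop Ordinal)) (hF : ∀ n, (TP P)^[n] I p = TV.F g) :
    TPomega P g I p = TV.F g := by
  simp only [TPomega]
  rw [if_neg h]
  by_cases hT : ∃ n, (TP P)^[n] I p = TV.T g
  · obtain ⟨n, hn⟩ := hT
    rw [hF n] at hn
    exact absurd hn F_ne_T
  · rw [if_neg hT, if_pos hF]

theorem TPomega_Fs {P : Program} {g : Ord1} {I : Interp} {p : ℕ}
    (h : ¬ ordOf (I p) < (g.1 : WithTop Ordinal)) (hT : ¬ ∃ n, (TP P)^[n] I p = TV.T g)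
    (hF : ¬ ∀ n, (TP P)^[n] I p = TV.F g) :
    TPomega P g I p = TV.F g.succ := by
  simp only [TPomega]; rw [if_neg h, if_neg hT, if_neg hF]

theorem TPomega_cases {P : Program} {g : Ord1} {I : Interp} (p : ℕ) :
    (ordOf (I p) < (g.1 : WithTop Ordinal) ∧ TPomega P g I p = I p) ∨
    (¬ ordOf (I p) < (g.1 : WithTop Ordinal) ∧
      ((TPomega P g I p = TV.T g ∧ ∃ n, (TP P)^[n] I p = TV.T g) ∨
       (TPomega P g I p = TV.F g ∧ ∀ n, (TP P)^[n] I p = TV.F g) ∨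
       (TPomega P g I p = TV.F g.succ ∧ ¬ (∃ n, (TP P)^[n] I p = TV.T g) ∧
         ¬ (∀ n, (TP P)^[n] I p = TV.F g)))) := by
  by_cases h1 : ordOf (I p) < (g.1 : WithTop Ordinal)
  · exact Or.inl ⟨h1, TPomega_low h1⟩
  · refine Or.inr ⟨h1, ?_⟩
    by_cases h2 : ∃ n, (TP P)^[n] I p = TV.T g
    · exact Or.inl ⟨TPomega_T h1 h2, h2⟩
    · by_cases h3 : ∀ n, (TP P)^[n] I p = TV.F g
      · exact Or.inr (Or.inl ⟨TPomega_F h1 h3, h3⟩)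
      · exact Or.inr (Or.inr ⟨TPomega_Fs h1 h2 h3, h2, h3⟩)

theorem sqcupI_cases (g : Ord1) (f : ∀ b : Ordinal, b < g.1 → Interp) (p : ℕ) :
    (∃ b, ∃ hb : b < g.1, sqcupI g f p = f b hb p ∧ ordOf (f b hb p) = (b : WithTop Ordinal)) ∨
    (sqcupI g f p = TV.F g ∧ ¬ ∃ b, ∃ hb : b < g.1, ordOf (f b hb p) = (b : WithTop Ordinal)) := by
  by_cases h : ∃ b, ∃ hb : b < g.1, ordOf (f b hb p) = (b : WithTop Ordinal)
  · refine Or.inl ⟨h.choose, h.choose_spec.choose, ?_, h.choose_spec.choose_spec⟩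
    simp only [sqcupI]
    rw [dif_pos h]
  · refine Or.inr ⟨?_, h⟩
    simp only [sqcupI]
    rw [dif_neg h]

theorem sqcupI_pos {g : Ord1} {f : ∀ b : Ordinal, b < g.1 → Interp} {p : ℕ}
    (h : ∃ b, ∃ hb : b < g.1, ordOf (f b hb p) = (b : WithTop Ordinal)) :
    ∃ b, ∃ hb : b < g.1, sqcupI g f p = f b hb p ∧ ordOf (f b hb p) = (b : WithTop Ordinal) := by
  rcases sqcupI_cases g f p with h' | ⟨_, hn⟩
  · exact h'
  · exact absurd h hn

theorem MA_zero (P : Program) : MA P 0 = TPomega P O0 botI :=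
  Ordinal.limitRecOn_zero _ _ _

theorem MA_succ (P : Program) (o : Ordinal) (h : o + 1 < ω₁) :
    MA P (o + 1) = TPomega P ⟨o + 1, h⟩ (MA P o) := by
  have e := Ordinal.limitRecOn_succ (motive := fun _ => Interp) o (TPomega P O0 botI)
    (fun o' ih => if h : o' + 1 < ω₁ then TPomega P ⟨o' + 1, h⟩ ih else ih)
    (fun o' _ ih => if h : o' < ω₁ then TPomega P ⟨o', h⟩ (sqcupI ⟨o', h⟩ ih) else botI)
  exact e.trans (dif_pos h)

theorem MA_succ' (P : Program) (o : Ordinal) (h : o + 1 < ω₁) :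
    MA P (Order.succ o) = TPomega P ⟨o + 1, h⟩ (MA P o) := MA_succ P o h

theorem MA_limit (P : Program) (o : Ordinal) (ho : Order.IsSuccLimit o) (h : o < ω₁) :
    MA P o = TPomega P ⟨o, h⟩ (sqcupI ⟨o, h⟩ fun b _ => MA P b) := by
  have e := Ordinal.limitRecOn_limit (motive := fun _ => Interp) o (TPomega P O0 botI)
    (fun o' ih => if h : o' + 1 < ω₁ then TPomega P ⟨o' + 1, h⟩ ih else ih)
    (fun o' _ ih => if h : o' < ω₁ then TPomega P ⟨o', h⟩ (sqcupI ⟨o', h⟩ ih) else botI) ho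
  exact e.trans (dif_pos h)

theorem olt_succ_iff {a b : Ordinal} : a < b + 1 ↔ a ≤ b := by
  rw [Ordinal.add_one_eq_succ]; exact Order.lt_succ_iff

theorem olt_succ (b : Ordinal) : b < b + 1 := olt_succ_iff.2 le_rfl

/-! ### persistence invariants -/

theorem MA_stable_down (P : Program) :
    ∀ o, o < ω₁ → ∀ (p : ℕ) (b : Ordinal), ordOf (MA P o p) = (b : WithTop Ordinal) → b ≤ o →
      MA P b p = MA P o p := by
  intro o
  induction o using Ordinal.induction with
  | h o IH =>
    intro ho p b hb hbo
    rcases Ordinal.zero_or_succ_or_isSuccLimit o with rfl | ⟨c, rfl⟩ | holim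
    · cases nonpos_iff_eq_zero.1 hbo
      rfl
    · have ho1 : c + 1 < ω₁ := ho
      have hsucc : MA P (Order.succ c) = TPomega P ⟨c + 1, ho1⟩ (MA P c) := MA_succ' P c ho1
      have hbo1 : b ≤ c + 1 := hbo
      rw [hsucc] at hb ⊢
      rcases TPomega_cases (P := P) (g := ⟨c + 1, ho1⟩) (I := MA P c) p with
        ⟨hlow, he⟩ | ⟨hhigh, hc⟩
      · rw [he] at hb ⊢
        have hblt : b ≤ c := by
          rw [hb] at hlow
          have hlow' : (b : WithTop Ordinal) < ((c + 1 : Ordinal) : WithTop Ordinal) := hlow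
          exact olt_succ_iff.1 (by exact_mod_cast hlow')
        exact IH c (Order.lt_succ_of_le le_rfl) (lt_trans (olt_succ c) ho1) p b hb hblt
      · rcases hc with ⟨he, _⟩ | ⟨he, _⟩ | ⟨he, _⟩
        · rw [he] at hb ⊢
          have hb' : (((c + 1 : Ordinal)) : WithTop Ordinal) = (b : WithTop Ordinal) := hb
          have : b = c + 1 := by exact_mod_cast hb'.symm
          subst this; rw [MA_succ P c ho1, he]
        · rw [he] at hb ⊢
          have hb' : (((c + 1 : Ordinal)) : WithTop Ordinal) = (b : WithTop Ordinal) := hb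
          have : b = c + 1 := by exact_mod_cast hb'.symm
          subst this; rw [MA_succ P c ho1, he]
        · exfalso
          rw [he] at hb
          have hbe : b = (c + 1) + 1 := by
            have hb' : ((((c + 1) + 1 : Ordinal)) : WithTop Ordinal) = (b : WithTop Ordinal) := hb
            exact_mod_cast hb'.symm
          rw [hbe] at hbo1
          exact absurd hbo1 (not_le.2 (olt_succ _))
    · have hlim : MA P o = TPomega P ⟨o, ho⟩ (sqcupI ⟨o, ho⟩ fun b _ => MA P b) :=
        MA_limit P o holim ho
      rw [hlim] at hb ⊢
      rcases TPomega_cases (P := P) (g := ⟨o, ho⟩) (I := sqcupI ⟨o, ho⟩ fun b _ => MA P b) p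
        with ⟨hlow, he⟩ | ⟨hhigh, hc⟩
      · rw [he] at hb ⊢
        rcases sqcupI_cases ⟨o, ho⟩ (fun b _ => MA P b) p with ⟨c, hco, hce, hcord⟩ | ⟨he2, _⟩
        · rw [hce] at hb ⊢
          rw [hcord] at hb
          have : b = c := by exact_mod_cast hb.symm
          subst this; rfl
        · exfalso
          rw [he2] at hlow
          simp at hlow
      · rcases hc with ⟨he, _⟩ | ⟨he, _⟩ | ⟨he, _⟩
        · rw [he] at hb ⊢
          have hb' : ((o : Ordinal) : WithTop Ordinal) = (b : WithTop Ordinal) := hb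
          have : b = o := by exact_mod_cast hb'.symm
          subst this; rw [hlim, he]
        · rw [he] at hb ⊢
          have hb' : ((o : Ordinal) : WithTop Ordinal) = (b : WithTop Ordinal) := hb
          have : b = o := by exact_mod_cast hb'.symm
          subst this; rw [hlim, he]
        · exfalso
          rw [he] at hb
          have hbe : b = o + 1 := by
            have hb' : ((o + 1 : Ordinal) : WithTop Ordinal) = (b : WithTop Ordinal) := hb
            exact_mod_cast hb'.symm
          rw [hbe] at hbo
          exact absurd hbo (not_le.2 (olt_succ _))

theorem MA_stable_up (P : Program) :
    ∀ o', o' < ω₁ → ∀ o, o ≤ o' → ∀ (p : ℕ) (b : Ordinal), ordOf (MA P o p) = (b : WithTop Ordinal) → b ≤ o →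
      MA P o' p = MA P o p := by
  intro o'
  induction o' using Ordinal.induction with
  | h o' IH =>
    intro ho' o hoo p b hb hbo
    rcases eq_or_lt_of_le hoo with rfl | holt
    · rfl
    rcases Ordinal.zero_or_succ_or_isSuccLimit o' with rfl | ⟨c, rfl⟩ | holim
    · exact absurd holt not_lt_zero
    · have ho1 : c + 1 < ω₁ := ho'
      have hoc : o ≤ c := Order.lt_succ_iff.1 holt
      have hcc : c < ω₁ := lt_trans (olt_succ c) ho1
      have hce : MA P c p = MA P o p := IH c (Order.lt_succ_of_le le_rfl) hcc o hoc p b hb hbo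
      have hsucc : MA P (Order.succ c) = TPomega P ⟨c + 1, ho1⟩ (MA P c) := MA_succ' P c ho1
      rw [hsucc, TPomega_low]
      · exact hce
      · rw [hce, hb]
        have h2 : b < c + 1 := olt_succ_iff.2 (le_trans hbo hoc)
        show (b : WithTop Ordinal) < ((c + 1 : Ordinal) : WithTop Ordinal)
        exact_mod_cast h2
    · -- limit case
      have hoω : o < ω₁ := lt_trans holt ho'
      have hMb : MA P b p = MA P o p := MA_stable_down P o hoω p b hb hbo
      have hbord : ordOf (MA P b p) = (b : WithTop Ordinal) := by rw [hMb]; exact hb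
      have hbo' : b < o' := lt_of_le_of_lt hbo holt
      have hex : ∃ c, ∃ hc : c < o', ordOf (MA P c p) = (c : WithTop Ordinal) :=
        ⟨b, hbo', hbord⟩
      obtain ⟨c, hco, hce, hcord⟩ := sqcupI_pos (g := ⟨o', ho'⟩) (f := fun b _ => MA P b) hex
      have hcb : MA P c p = MA P b p := by
        rcases le_total c b with hle | hle
        · exact (IH b hbo' (lt_trans hbo' ho') c hle p c hcord le_rfl).symm
        · exact IH c hco (lt_trans hco ho') b hle p b hbord le_rfl
      have hlim : MA P o' = TPomega P ⟨o', ho'⟩ (sqcupI ⟨o', ho'⟩ fun b _ => MA P b) :=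
        MA_limit P o' holim ho'
      rw [hlim, TPomega_low]
      · rw [hce, hcb, hMb]
      · rw [hce, hcord]
        show (c : WithTop Ordinal) < ((o' : Ordinal) : WithTop Ordinal)
        exact_mod_cast hco
/-! ### the main stage lemma: `T_P(M_α)` agrees with `M_α` up to order `α` -/

theorem Prec.refl (g : Ord1) (I : Interp) : Prec g I I :=
  ⟨fun _ _ => rfl, fun _ hq => hq, fun _ hq => hq⟩

theorem subtype_eta {g : Ord1} (hb : g.1 < ω₁) : (⟨g.1, hb⟩ : Ord1) = g :=
  Subtype.ext rfl

theorem stage (P : Program) (g : Ord1) (J : Interp)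
    (hform : MA P g.1 = TPomega P g J)
    (hJvals : ∀ p, ordOf (J p) ≤ (g.1 : WithTop Ordinal))
    (hJnoT : ∀ p, J p ≠ TV.T g)
    (hJfix : ∀ p, (ordOf (TP P J p) < (g.1 : WithTop Ordinal) ∨
        ordOf (J p) < (g.1 : WithTop Ordinal)) → TP P J p = J p) :
    ∀ p, (ordOf (TP P (MA P g.1) p) ≤ (g.1 : WithTop Ordinal) ∨
        ordOf (MA P g.1 p) ≤ (g.1 : WithTop Ordinal)) →
      TP P (MA P g.1) p = MA P g.1 p := by
  set M := MA P g.1 with hM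
  -- J has no strict-band values: values of order ≥ g are exactly F g
  have hJband : ∀ p, ¬ ordOf (J p) < (g.1 : WithTop Ordinal) → J p = TV.F g := by
    intro p hp
    have he : ordOf (J p) = (g.1 : WithTop Ordinal) := le_antisymm (hJvals p) (not_lt.1 hp)
    obtain ⟨hb, hc⟩ := ordOf_cases he
    rcases hc with hc | hc
    · rw [hc, subtype_eta]
    · exact absurd (by rw [hc, subtype_eta]) (hJnoT p)
  -- low-order stability of the iterates
  have hlow : ∀ n, EqB g.1 ((TP P)^[n] J) J := by
    intro n
    induction n with
    | zero => exact fun q _ => rfl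
    | succ n ih =>
      intro q hq
      rw [Function.iterate_succ_apply'] at hq ⊢
      have hE := EqB.TP (P := P) (g := g) ih
      rcases hq with hq | hq
      · have h1 := hE q (Or.inl hq)
        rw [h1] at hq ⊢
        exact hJfix q (Or.inl hq)
      · have h2 := hJfix q (Or.inr hq)
        have h3 : ordOf (TP P J q) < (g.1 : WithTop Ordinal) := by rw [h2]; exact hq
        exact (hE q (Or.inr h3)).trans h2
  -- M agrees with J on the low part
  have hMJ : EqB g.1 M J := by
    intro q hq
    have hMq : M q = TPomega P g J q := congrFun hform q
    rcases TPomega_cases (P := P) (g := g) (I := J) q with ⟨h1, h2⟩ | ⟨h1, h2⟩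
    · rw [hMq, h2]
    · exfalso
      rcases hq with hq | hq
      · rcases h2 with ⟨h3, _⟩ | ⟨h3, _⟩ | ⟨h3, _⟩ <;> rw [hMq, h3] at hq <;>
          simp only [ordOf_T, ordOf_F] at hq
        · exact absurd hq (by simp)
        · exact absurd hq (by simp)
        · have hq' : ((g.1 + 1 : Ordinal) : WithTop Ordinal) < (g.1 : WithTop Ordinal) := hq
          have := lt_of_le_of_lt (WithTop.coe_le_coe.2 (le_of_lt (olt_succ g.1))) hq'
          exact absurd this (lt_irrefl _)
      · exact h1 hq
  -- all iterates are band-valued on the high part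
  have hIband : ∀ n p, ¬ ordOf (J p) < (g.1 : WithTop Ordinal) →
      ¬ ordOf ((TP P)^[n] J p) < (g.1 : WithTop Ordinal) := by
    intro n p hp hc
    exact hp (by rw [← hlow n p (Or.inl hc)]; exact hc)
  -- characterization of T g values of M
  have hMT : ∀ p, M p = TV.T g ↔ ∃ n, (TP P)^[n] J p = TV.T g := by
    intro p
    have hMq : M p = TPomega P g J p := congrFun hform p
    constructor
    · intro hT
      rcases TPomega_cases (P := P) (g := g) (I := J) p with ⟨h1, h2⟩ | ⟨h1, h2⟩
      · exfalso
        apply hJnoT p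
        rw [← h2, ← hMq]
        exact hT
      · rcases h2 with ⟨h3, h4⟩ | ⟨h3, _⟩ | ⟨h3, _⟩
        · exact h4
        · rw [hMq, h3] at hT; exact absurd hT F_ne_T
        · rw [hMq, h3] at hT; exact absurd hT F_ne_T
    · rintro ⟨n, hn⟩
      by_cases h1 : ordOf (J p) < (g.1 : WithTop Ordinal)
      · exfalso
        have := hlow n p (Or.inr h1)
        rw [hn] at this
        exact hJnoT p (this.symm ▸ rfl)
      · rw [hMq, TPomega_T h1 ⟨n, hn⟩]
  -- characterization of F g values of M
  have hMF : ∀ p, ¬ ordOf (J p) < (g.1 : WithTop Ordinal) →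
      (M p = TV.F g ↔ ∀ n, (TP P)^[n] J p = TV.F g) := by
    intro p h1
    have hMq : M p = TPomega P g J p := congrFun hform p
    constructor
    · intro hF
      rcases TPomega_cases (P := P) (g := g) (I := J) p with ⟨h2, _⟩ | ⟨_, h2⟩
      · exact absurd h2 h1
      · rcases h2 with ⟨h3, _⟩ | ⟨h3, h4⟩ | ⟨h3, _⟩
        · rw [hMq, h3] at hF; exact absurd hF T_ne_F
        · exact h4
        · exfalso
          rw [hMq, h3] at hF
          have := F_inj.1 hF
          have h5 : g.1 + 1 = g.1 := congrArg Subtype.val this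
          exact absurd h5 (ne_of_gt (olt_succ g.1))
    · intro hall
      rw [hMq, TPomega_F h1 hall]
  -- the three possible high values of M
  have hMhigh : ∀ p, ¬ ordOf (J p) < (g.1 : WithTop Ordinal) →
      M p = TV.T g ∨ M p = TV.F g ∨ M p = TV.F g.succ := by
    intro p h1
    have hMq : M p = TPomega P g J p := congrFun hform p
    rcases TPomega_cases (P := P) (g := g) (I := J) p with ⟨h2, _⟩ | ⟨_, h2⟩
    · exact absurd h2 h1
    · rcases h2 with ⟨h3, _⟩ | ⟨h3, _⟩ | ⟨h3, _⟩
      · exact Or.inl (hMq ▸ h3)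
      · exact Or.inr (Or.inl (hMq ▸ h3))
      · exact Or.inr (Or.inr (hMq ▸ h3))
  -- the iteration chain
  have hbase : Prec g J (TP P J) := by
    refine ⟨fun q hq => (hJfix q hq.symm).symm, ?_, ?_⟩
    · intro q hq; exact absurd hq (hJnoT q)
    · intro q hq
      by_cases h1 : ordOf (J q) < (g.1 : WithTop Ordinal)
      · rw [hJfix q (Or.inr h1)]; exact hq
      · rw [hJband q h1] at hq; exact absurd hq (lt_irrefl _)
  have hchain : ∀ n, Prec g ((TP P)^[n] J) ((TP P)^[n + 1] J) := by
    intro n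
    induction n with
    | zero => exact hbase
    | succ n ih =>
      have := Prec.monoTP (P := P) ih
      rwa [← Function.iterate_succ_apply' (TP P) n,
        ← Function.iterate_succ_apply' (TP P) (n + 1)] at this
  have hchainle : ∀ m n, m ≤ n → Prec g ((TP P)^[m] J) ((TP P)^[n] J) := by
    intro m n hmn
    induction n with
    | zero => cases Nat.le_zero.1 hmn; exact Prec.refl g _
    | succ n ih =>
      rcases Nat.lt_or_ge m (n + 1) with hlt | hge
      · exact (ih (Nat.lt_succ_iff.1 hlt)).trans (hchain n)
      · cases Nat.le_antisymm hmn hge; exact Prec.refl g _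
  -- every iterate precedes M
  have hprecM : ∀ n, Prec g ((TP P)^[n] J) M := by
    intro n
    refine ⟨?_, ?_, ?_⟩
    · intro q hq
      rcases hq with hq | hq
      · have h1 := hlow n q (Or.inl hq)
        have h2 : ordOf (J q) < (g.1 : WithTop Ordinal) := by rw [← h1]; exact hq
        rw [h1, hMJ q (Or.inr h2)]
      · have h1 := hMJ q (Or.inl hq)
        have h2 : ordOf (J q) < (g.1 : WithTop Ordinal) := by rw [← h1]; exact hq
        rw [h1, hlow n q (Or.inr h2)]
    · intro q hq
      exact (hMT q).2 ⟨n, hq⟩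
    · intro q hq
      by_cases h1 : ordOf (J q) < (g.1 : WithTop Ordinal)
      · have h2 := hlow n q (Or.inr h1)
        rw [h2] at hq
        rw [hMJ q (Or.inr h1)]
        exact hq
      · rcases hMhigh q h1 with h2 | h2 | h2
        · rw [h2]; exact F_lt_T
        · exfalso
          have := ((hMF q h1).1 h2) n
          rw [this] at hq
          exact absurd hq (lt_irrefl _)
        · rw [h2]
          exact F_lt_F.2 (Subtype.mk_lt_mk.2 (olt_succ g.1))
  -- Case C-T : if M p = T g then TP M p = T g
  have hCT : ∀ p, M p = TV.T g → TP P M p = TV.T g := by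
    intro p hp
    obtain ⟨n, hn⟩ := (hMT p).1 hp
    have hn1 : (TP P)^[n + 1] J p = TV.T g := (hchain n).2.1 p hn
    rw [Function.iterate_succ_apply'] at hn1
    exact (hprecM n).monoTP.2.1 p hn1
  -- uniform eventual bounds for bodies
  have hUnifF : ∀ (b : List Lit), (∀ l ∈ b, TV.F g < evalLit M l) →
      ∃ N, ∀ l ∈ b, TV.F g < evalLit ((TP P)^[N] J) l := by
    intro b hb
    induction b with
    | nil => exact ⟨0, by simp⟩
    | cons l b ih =>
      obtain ⟨N1, hN1⟩ := ih fun l' hl' => hb l' (by simp [hl'])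
      have hl : TV.F g < evalLit M l := hb l (by simp)
      have hone : ∃ n, TV.F g < evalLit ((TP P)^[n] J) l := by
        cases l with
        | pos q =>
          by_cases h1 : ordOf (J q) < (g.1 : WithTop Ordinal)
          · refine ⟨0, ?_⟩
            show TV.F g < (TP P)^[0] J q
            rw [Function.iterate_zero_apply, ← hMJ q (Or.inr h1)]
            exact hl
          · rcases hMhigh q h1 with h2 | h2 | h2
            · obtain ⟨n, hn⟩ := (hMT q).1 h2
              refine ⟨n, ?_⟩
              show TV.F g < (TP P)^[n] J q
              rw [hn]
              exact F_lt_T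
            · exfalso
              have : TV.F g < M q := hl
              rw [h2] at this
              exact absurd this (lt_irrefl _)
            · -- F g.succ case: some iterate differs from F g
              have hnall : ¬ ∀ n, (TP P)^[n] J q = TV.F g := by
                intro hall
                have := (hMF q h1).2 hall
                rw [h2] at this
                have h5 := congrArg Subtype.val (F_inj.1 this)
                exact absurd h5 (ne_of_gt (olt_succ g.1))
              push_neg at hnall
              obtain ⟨n, hn⟩ := hnall
              refine ⟨n, ?_⟩
              have hband := hIband n q h1
              have hge := band_F_le (g := g) (not_lt.1 hband)
              exact lt_of_le_of_ne hge (Ne.symm hn)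
        | neg q =>
          by_cases h1 : ordOf (J q) < (g.1 : WithTop Ordinal)
          · refine ⟨0, ?_⟩
            have he : (TP P)^[0] J q = M q := by
              rw [Function.iterate_zero_apply]
              exact (hMJ q (Or.inr h1)).symm
            show TV.F g < negv ((TP P)^[0] J q)
            rw [he]
            exact hl
          · refine ⟨0, ?_⟩
            show TV.F g < negv ((TP P)^[0] J q)
            exact band_negv_gt (not_lt.1 (hIband 0 q h1))
        | tt => exact ⟨0, F_lt_T⟩
        | ff =>
          exfalso
          have : TV.F g < TV.F O0 := hl
          exact absurd (Subtype.coe_lt_coe.2 (F_lt_F.1 this)) not_lt_zero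
      obtain ⟨N2, hN2⟩ := hone
      refine ⟨max N1 N2, ?_⟩
      intro l' hl'
      rcases List.mem_cons.1 hl' with rfl | hl'
      · exact (hchainle N2 (max N1 N2) (le_max_right _ _)).litF hN2
      · exact (hchainle N1 (max N1 N2) (le_max_left _ _)).litF (hN1 l' hl')
  have hUnifT : ∀ (b : List Lit), (∀ l ∈ b, TV.T g ≤ evalLit M l) →
      ∃ N, ∀ l ∈ b, TV.T g ≤ evalLit ((TP P)^[N] J) l := by
    intro b hb
    induction b with
    | nil => exact ⟨0, by simp⟩
    | cons l b ih =>
      obtain ⟨N1, hN1⟩ := ih fun l' hl' => hb l' (by simp [hl'])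
      have hl : TV.T g ≤ evalLit M l := hb l (by simp)
      have hone : ∃ n, TV.T g ≤ evalLit ((TP P)^[n] J) l := by
        cases l with
        | pos q =>
          obtain ⟨c, hc, hcg⟩ := T_le_cases hl
          rcases lt_or_eq_of_le hcg with hlt | rfl
          · have h1 : ordOf (M q) < (g.1 : WithTop Ordinal) := by
              rw [show M q = TV.T c from hc, ordOf_T]
              exact_mod_cast Subtype.coe_lt_coe.2 hlt
            have h2 := hMJ q (Or.inl h1)
            have h3 : ordOf (J q) < (g.1 : WithTop Ordinal) := by rw [← h2]; exact h1
            refine ⟨0, ?_⟩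
            show TV.T g ≤ (TP P)^[0] J q
            rw [Function.iterate_zero_apply, ← h2]
            exact hl
          · obtain ⟨n, hn⟩ := (hMT q).1 hc
            refine ⟨n, ?_⟩
            show TV.T c ≤ (TP P)^[n] J q
            rw [hn]
        | neg q =>
          have hl' : TV.T g ≤ negv (M q) := hl
          rcases TV.cases (M q) with ⟨a, ha⟩ | ha | ⟨a, ha⟩
          · have h1 : ordOf (M q) < (g.1 : WithTop Ordinal) := by
              rw [ha, ordOf_F]
              rw [ha, negv_F] at hl'
              have h2 : a.succ ≤ g := T_le_T.1 hl'
              have h3 : a.1 < g.1 := lt_of_lt_of_le (olt_succ a.1) h2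
              exact_mod_cast h3
            have h2 := hMJ q (Or.inl h1)
            refine ⟨0, ?_⟩
            show TV.T g ≤ negv ((TP P)^[0] J q)
            rw [Function.iterate_zero_apply, ← h2]
            exact hl'
          · rw [ha, negv_Z] at hl'
            exact absurd hl' (not_le.2 Z_lt_T)
          · rw [ha, negv_T] at hl'
            exact absurd hl' (not_le.2 F_lt_T)
        | tt => exact ⟨0, le_top' _⟩
        | ff => exact absurd hl (not_le.2 F_lt_T)
      obtain ⟨N2, hN2⟩ := hone
      refine ⟨max N1 N2, ?_⟩
      intro l' hl'
      rcases List.mem_cons.1 hl' with rfl | hl'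
      · exact (hchainle N2 (max N1 N2) (le_max_right _ _)).litT hN2
      · exact (hchainle N1 (max N1 N2) (le_max_left _ _)).litT (hN1 l' hl')
  -- main case analysis
  intro p hyp
  by_cases hA : ordOf (M p) < (g.1 : WithTop Ordinal)
  · have hMJp : M p = J p := hMJ p (Or.inl hA)
    have hJp : ordOf (J p) < (g.1 : WithTop Ordinal) := by rw [← hMJp]; exact hA
    have h1 : TP P J p = J p := hJfix p (Or.inr hJp)
    have h2 : ordOf (TP P J p) < (g.1 : WithTop Ordinal) := by rw [h1]; exact hJp
    have h3 : TP P M p = TP P J p := (EqB.TP (P := P) hMJ) p (Or.inr h2)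
    rw [h3, h1, hMJp]
  · by_cases hB : ordOf (TP P M p) < (g.1 : WithTop Ordinal)
    · exfalso
      have h3 : TP P M p = TP P J p := (EqB.TP (P := P) hMJ) p (Or.inl hB)
      have h4 : ordOf (TP P J p) < (g.1 : WithTop Ordinal) := by rw [← h3]; exact hB
      have h5 : TP P J p = J p := hJfix p (Or.inl h4)
      have h6 : ordOf (J p) < (g.1 : WithTop Ordinal) := by rw [← h5]; exact h4
      exact hA (by rw [hMJ p (Or.inr h6)]; exact h6)
    · -- high case : M p ∈ {T g, F g, F g.succ}
      have hhigh : ¬ ordOf (J p) < (g.1 : WithTop Ordinal) := by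
        intro h1
        exact hA (by rw [hMJ p (Or.inr h1)]; exact h1)
      have hCF : M p = TV.F g → TP P M p = TV.F g := by
        intro hp
        by_contra hne
        have hgt : TV.F g < TP P M p :=
          lt_of_le_of_ne (band_F_le (not_lt.1 hB)) (Ne.symm hne)
        obtain ⟨c, hc, hh, hbody⟩ := lt_TP hgt
        have hlits : ∀ l ∈ c.body, TV.F g < evalLit M l :=
          fun l hl => lt_of_lt_of_le hbody (evalBody_le_lit hl)
        obtain ⟨N, hN⟩ := hUnifF c.body hlits
        have hb2 : TV.F g < evalBody ((TP P)^[N] J) c.body := lt_evalBody F_lt_T hN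
        have hb3 : TV.F g < (TP P)^[N + 1] J p := by
          rw [Function.iterate_succ_apply']
          exact lt_of_lt_of_le hb2 (hh ▸ le_TP hc)
        have := (hMF p hhigh).1 hp (N + 1)
        rw [this] at hb3
        exact absurd hb3 (lt_irrefl _)
      have hDT : TP P M p = TV.T g → M p = TV.T g := by
        intro hp
        obtain ⟨c, hc, hh, hbody⟩ := TP_eq_T hp
        have hlits : ∀ l ∈ c.body, TV.T g ≤ evalLit M l :=
          fun l hl => hbody ▸ evalBody_le_lit hl
        obtain ⟨N, hN⟩ := hUnifT c.body hlits
        have hb2 : TV.T g ≤ evalBody ((TP P)^[N] J) c.body := le_evalBody hN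
        have hb3 : TV.T g ≤ (TP P)^[N + 1] J p := by
          rw [Function.iterate_succ_apply']
          exact le_trans hb2 (hh ▸ le_TP hc)
        obtain ⟨c', hc', hcg⟩ := T_le_cases hb3
        rcases lt_or_eq_of_le hcg with hlt | rfl
        · exfalso
          have h1 : ordOf ((TP P)^[N + 1] J p) < (g.1 : WithTop Ordinal) := by
            rw [hc', ordOf_T]
            exact_mod_cast Subtype.coe_lt_coe.2 hlt
          exact hIband (N + 1) p hhigh h1
        · exact (hMT p).2 ⟨N + 1, hc'⟩
      have hDF : TP P M p = TV.F g → M p = TV.F g := by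
        intro hp
        rcases hMhigh p hhigh with h2 | h2 | h2
        · exfalso
          rw [hCT p h2] at hp
          exact absurd hp T_ne_F
        · exact h2
        · exfalso
          -- M p = F g.succ : some iterate exceeds F g, so TP M p > F g
          have hnall : ¬ ∀ n, (TP P)^[n] J p = TV.F g := by
            intro hall
            have := (hMF p hhigh).2 hall
            rw [h2] at this
            have h5 := congrArg Subtype.val (F_inj.1 this)
            exact absurd h5 (ne_of_gt (olt_succ g.1))
          push_neg at hnall
          obtain ⟨n, hn⟩ := hnall
          have hgt : TV.F g < (TP P)^[n] J p :=
            lt_of_le_of_ne (band_F_le (not_lt.1 (hIband n p hhigh))) (Ne.symm hn)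
          rcases n with _ | m
          · rw [Function.iterate_zero_apply] at hn
            exact hn (hJband p hhigh)
          · rw [Function.iterate_succ_apply'] at hgt
            have := (hprecM m).monoTP.2.2 p hgt
            rw [hp] at this
            exact absurd this (lt_irrefl _)
      rcases hyp with h1 | h1
      · have he : ordOf (TP P M p) = (g.1 : WithTop Ordinal) := le_antisymm h1 (not_lt.1 hB)
        obtain ⟨hb, hcse⟩ := ordOf_cases he
        rcases hcse with hcse | hcse
        · rw [subtype_eta] at hcse
          rw [hcse, hDF hcse]
        · rw [subtype_eta] at hcse
          rw [hcse, hDT hcse]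
      · have he : ordOf (M p) = (g.1 : WithTop Ordinal) := le_antisymm h1 (not_lt.1 hA)
        obtain ⟨hb, hcse⟩ := ordOf_cases he
        rcases hcse with hcse | hcse
        · rw [subtype_eta] at hcse
          rw [hcse, hCF hcse]
        · rw [subtype_eta] at hcse
          rw [hcse, hCT p hcse]
/-! ### value bounds for the approximations, and the fixpoint-up-to-order theorem -/

theorem wt_not_lt_zero (x : WithTop Ordinal) : ¬ x < ((0 : Ordinal) : WithTop Ordinal) := by
  refine not_lt.2 ?_
  induction x using WithTop.recTopCoe with
  | top => exact le_top
  | coe b => exact WithTop.coe_le_coe.2 zero_le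

theorem wt_lt_succ {x : WithTop Ordinal} {c : Ordinal} :
    x < ((c + 1 : Ordinal) : WithTop Ordinal) ↔ x ≤ (c : WithTop Ordinal) := by
  induction x using WithTop.recTopCoe with
  | top =>
    constructor
    · intro h; exact absurd h not_top_lt
    · intro h; exact absurd h (by simp)
  | coe b =>
    rw [WithTop.coe_lt_coe, WithTop.coe_le_coe]
    exact olt_succ_iff

theorem TPomega_vals {P : Program} {g : Ord1} {I : Interp}
    (hI : ∀ p, ordOf (I p) ≤ (g.1 : WithTop Ordinal)) (p : ℕ) :
    ordOf (TPomega P g I p) ≤ (g.1 : WithTop Ordinal) ∨ TPomega P g I p = TV.F g.succ := by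
  rcases TPomega_cases (P := P) (g := g) (I := I) p with ⟨h1, h2⟩ | ⟨h1, h2⟩
  · exact Or.inl (by rw [h2]; exact hI p)
  · rcases h2 with ⟨h3, _⟩ | ⟨h3, _⟩ | ⟨h3, _⟩
    · exact Or.inl (by rw [h3]; exact le_rfl)
    · exact Or.inl (by rw [h3]; exact le_rfl)
    · exact Or.inr h3

theorem MA_vals (P : Program) :
    ∀ o, ∀ h : o < ω₁, ∀ p, ordOf (MA P o p) ≤ (o : WithTop Ordinal) ∨
      MA P o p = TV.F (Ord1.succ ⟨o, h⟩) := by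
  intro o
  induction o using Ordinal.induction with
  | h o IH =>
    intro ho p
    rcases Ordinal.zero_or_succ_or_isSuccLimit o with rfl | ⟨c, rfl⟩ | holim
    · rw [MA_zero]
      refine TPomega_vals (g := O0) (fun q => ?_) p
      rw [show botI q = TV.F O0 from rfl, ordOf_F]
    · have ho1 : c + 1 < ω₁ := ho
      have hcc : c < ω₁ := lt_trans (olt_succ c) ho1
      have hIvals : ∀ q, ordOf (MA P c q) ≤ ((c + 1 : Ordinal) : WithTop Ordinal) := by
        intro q
        rcases IH c (Order.lt_succ_of_le le_rfl) hcc q with h1 | h1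
        · exact le_trans h1 (WithTop.coe_le_coe.2 (le_of_lt (olt_succ c)))
        · rw [h1]; exact le_rfl
      rw [MA_succ' P c ho1]
      exact TPomega_vals (g := ⟨c + 1, ho1⟩) hIvals p
    · have hIvals : ∀ q, ordOf (sqcupI ⟨o, ho⟩ (fun b _ => MA P b) q) ≤ (o : WithTop Ordinal) := by
        intro q
        rcases sqcupI_cases ⟨o, ho⟩ (fun b _ => MA P b) q with ⟨c, hco, hce, hcord⟩ | ⟨he, _⟩
        · rw [hce, hcord]
          exact WithTop.coe_le_coe.2 (le_of_lt hco)
        · rw [he]; exact le_rfl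
      rw [MA_limit P o holim ho]
      exact TPomega_vals (g := ⟨o, ho⟩) hIvals p

theorem G3 (P : Program) :
    ∀ o, o < ω₁ → ∀ p, (ordOf (TP P (MA P o) p) ≤ (o : WithTop Ordinal) ∨
        ordOf (MA P o p) ≤ (o : WithTop Ordinal)) →
      TP P (MA P o) p = MA P o p := by
  intro o
  induction o using Ordinal.induction with
  | h o IH =>
    intro ho
    rcases Ordinal.zero_or_succ_or_isSuccLimit o with rfl | ⟨c, rfl⟩ | holim
    · -- zero stage
      refine stage P ⟨0, ho⟩ botI (MA_zero P)
        (fun p => by rw [show botI p = TV.F O0 from rfl, ordOf_F]; exact le_rfl)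
        (fun p => F_ne_T) ?_
      intro p hp
      rcases hp with hp | hp
      · exact absurd hp (wt_not_lt_zero _)
      · exact absurd hp (wt_not_lt_zero _)
    · -- successor stage
      have ho1 : c + 1 < ω₁ := ho
      have hcc : c < ω₁ := lt_trans (olt_succ c) ho1
      refine stage P ⟨c + 1, ho1⟩ (MA P c) (MA_succ' P c ho1) ?_ ?_ ?_
      · intro p
        rcases MA_vals P c hcc p with h1 | h1
        · exact le_trans h1 (WithTop.coe_le_coe.2 (le_of_lt (olt_succ c)))
        · rw [h1]; exact le_rfl
      · intro p hp
        rcases MA_vals P c hcc p with h1 | h1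
        · rw [hp] at h1
          have h2 : ((c + 1 : Ordinal) : WithTop Ordinal) ≤ (c : WithTop Ordinal) := h1
          exact absurd (WithTop.coe_le_coe.1 h2) (not_le.2 (olt_succ c))
        · rw [hp] at h1
          exact absurd h1 T_ne_F
      · intro p hp
        have hle : ordOf (TP P (MA P c) p) ≤ (c : WithTop Ordinal) ∨
            ordOf (MA P c p) ≤ (c : WithTop Ordinal) := by
          rcases hp with hp | hp
          · exact Or.inl (wt_lt_succ.1 hp)
          · exact Or.inr (wt_lt_succ.1 hp)
        exact IH c (Order.lt_succ_of_le le_rfl) hcc p hle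
    · -- limit stage
      set J : Interp := sqcupI ⟨o, ho⟩ (fun b _ => MA P b) with hJ
      have hJvals : ∀ p, ordOf (J p) ≤ (o : WithTop Ordinal) := by
        intro q
        rcases sqcupI_cases ⟨o, ho⟩ (fun b _ => MA P b) q with ⟨c, hco, hce, hcord⟩ | ⟨he, _⟩
        · rw [hJ, hce, hcord]
          exact WithTop.coe_le_coe.2 (le_of_lt hco)
        · rw [hJ, he]; exact le_rfl
      have hJnoT : ∀ p, J p ≠ TV.T ⟨o, ho⟩ := by
        intro q hq
        rcases sqcupI_cases ⟨o, ho⟩ (fun b _ => MA P b) q with ⟨c, hco, hce, hcord⟩ | ⟨he, _⟩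
        · rw [hJ, hce] at hq
          rw [hq] at hcord
          have : ((o : Ordinal) : WithTop Ordinal) = (c : WithTop Ordinal) := hcord
          exact absurd (WithTop.coe_inj.1 this).symm (ne_of_lt hco)
        · rw [hJ, he] at hq
          exact F_ne_T hq
      -- J agrees with each approximation below the limit
      have hJM : ∀ γ, γ < o → EqB γ J (MA P γ) := by
        intro γ hγ q hq
        have hγω : γ < ω₁ := lt_trans hγ ho
        rcases hq with hq | hq
        · rcases sqcupI_cases ⟨o, ho⟩ (fun b _ => MA P b) q with ⟨c, hco, hce, hcord⟩ | ⟨he, _⟩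
          · rw [hJ, hce] at hq ⊢
            rw [hcord] at hq
            have hcγ : c < γ := by exact_mod_cast hq
            exact (MA_stable_up P γ hγω c (le_of_lt hcγ) q c hcord le_rfl).symm
          · exfalso
            rw [hJ, he] at hq
            have : ((o : Ordinal) : WithTop Ordinal) < (γ : WithTop Ordinal) := hq
            exact absurd (WithTop.coe_lt_coe.1 this) (not_lt.2 (le_of_lt hγ))
        · obtain ⟨b, hbω, hbγ, hbcase⟩ := ordOf_lt_cases hq
          have hbord : ordOf (MA P γ q) = (b : WithTop Ordinal) := by
            rcases hbcase with h1 | h1 <;> rw [h1] <;> rfl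
          have hdown : MA P b q = MA P γ q :=
            MA_stable_down P γ hγω q b hbord (le_of_lt hbγ)
          have hbord2 : ordOf (MA P b q) = (b : WithTop Ordinal) := by rw [hdown]; exact hbord
          have hbo : b < o := lt_trans hbγ hγ
          have hex : ∃ c, ∃ hc : c < o, ordOf (MA P c q) = (c : WithTop Ordinal) :=
            ⟨b, hbo, hbord2⟩
          obtain ⟨c, hco, hce, hcord⟩ := sqcupI_pos (g := ⟨o, ho⟩) (f := fun b _ => MA P b) hex
          have hcb : MA P c q = MA P b q := by
            rcases le_total c b with hle | hle
            · exact (MA_stable_up P b (lt_trans hbo ho) c hle q c hcord le_rfl).symm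
            · exact MA_stable_up P c (lt_trans hco ho) b hle q b hbord2 le_rfl
          rw [hJ, hce, hcb, hdown]
      have hJfix : ∀ p, (ordOf (TP P J p) < (o : WithTop Ordinal) ∨
          ordOf (J p) < (o : WithTop Ordinal)) → TP P J p = J p := by
        intro p hp
        rcases hp with hp | hp
        · obtain ⟨b, hbω, hbo, hbcase⟩ := ordOf_lt_cases hp
          have hbord : ordOf (TP P J p) = (b : WithTop Ordinal) := by
            rcases hbcase with h1 | h1 <;> rw [h1] <;> rfl
          have hγo : b + 1 < o := holim.succ_lt hbo
          have hγω : b + 1 < ω₁ := lt_trans hγo ho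
          have hE : EqB ((⟨b + 1, hγω⟩ : Ord1)).1 J (MA P (b + 1)) := hJM (b + 1) hγo
          have h1 : TP P J p = TP P (MA P (b + 1)) p := by
            refine (EqB.TP (P := P) (g := ⟨b + 1, hγω⟩) hE) p (Or.inl ?_)
            rw [hbord]
            show (b : WithTop Ordinal) < ((b + 1 : Ordinal) : WithTop Ordinal)
            exact_mod_cast olt_succ b
          have h2 : ordOf (TP P (MA P (b + 1)) p) ≤ ((b + 1 : Ordinal) : WithTop Ordinal) := by
            rw [← h1, hbord]
            exact_mod_cast le_of_lt (olt_succ b)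
          have h3 : TP P (MA P (b + 1)) p = MA P (b + 1) p :=
            IH (b + 1) hγo hγω p (Or.inl h2)
          have h4 : ordOf (MA P (b + 1) p) < ((b + 1 : Ordinal) : WithTop Ordinal) := by
            rw [← h3, ← h1, hbord]
            exact_mod_cast olt_succ b
          have h5 : J p = MA P (b + 1) p := hE p (Or.inr h4)
          rw [h1, h3, ← h5]
        · obtain ⟨b, hbω, hbo, hbcase⟩ := ordOf_lt_cases hp
          have hbord : ordOf (J p) = (b : WithTop Ordinal) := by
            rcases hbcase with h1 | h1 <;> rw [h1] <;> rfl
          have hγo : b + 1 < o := holim.succ_lt hbo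
          have hγω : b + 1 < ω₁ := lt_trans hγo ho
          have hE : EqB ((⟨b + 1, hγω⟩ : Ord1)).1 J (MA P (b + 1)) := hJM (b + 1) hγo
          have h5 : J p = MA P (b + 1) p := by
            refine hE p (Or.inl ?_)
            rw [hbord]
            show (b : WithTop Ordinal) < ((b + 1 : Ordinal) : WithTop Ordinal)
            exact_mod_cast olt_succ b
          have h6 : ordOf (MA P (b + 1) p) ≤ ((b + 1 : Ordinal) : WithTop Ordinal) := by
            rw [← h5, hbord]
            exact_mod_cast le_of_lt (olt_succ b)
          have h3 : TP P (MA P (b + 1)) p = MA P (b + 1) p :=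
            IH (b + 1) hγo hγω p (Or.inr h6)
          have h7 : ordOf (TP P (MA P (b + 1)) p) < ((b + 1 : Ordinal) : WithTop Ordinal) := by
            rw [h3, ← h5, hbord]
            exact_mod_cast olt_succ b
          have h1 : TP P J p = TP P (MA P (b + 1)) p :=
            (EqB.TP (P := P) (g := ⟨b + 1, hγω⟩) hE) p (Or.inr h7)
          rw [h1, h3, ← h5]
      exact stage P ⟨o, ho⟩ J (MA_limit P o holim ho) hJvals hJnoT hJfix
/-! ### existence and uniqueness of the depth -/

theorem depth_exists (P : Program) : ∃ δ : Ord1, isDepth P δ := by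
  set S : Set Ordinal :=
    {o | ∃ h : o < ω₁, level (MA P o) (TV.T ⟨o, h⟩) = ∅ ∧ level (MA P o) (TV.F ⟨o, h⟩) = ∅}
    with hS
  have hSne : S.Nonempty := by
    by_contra hemp
    push_neg at hemp
    -- every countable ordinal has a witness atom of that order, giving an injection into ℕ
    have hwit : ∀ g : Ord1, ∃ p, MA P g.1 p = TV.T g ∨ MA P g.1 p = TV.F g := by
      intro g
      have : g.1 ∉ S := by rw [hemp]; exact Set.notMem_empty _
      rw [hS] at this
      simp only [Set.mem_setOf_eq, not_exists] at this
      have h2 := this g.2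
      rw [not_and_or] at h2
      rcases h2 with h2 | h2
      · obtain ⟨p, hp⟩ := Set.nonempty_iff_ne_empty.2 h2
        exact ⟨p, Or.inl (by simpa [level, subtype_eta] using hp)⟩
      · obtain ⟨p, hp⟩ := Set.nonempty_iff_ne_empty.2 h2
        exact ⟨p, Or.inr (by simpa [level, subtype_eta] using hp)⟩
    set f : Ord1 → ℕ := fun g => (hwit g).choose with hf
    have hford : ∀ g : Ord1, ordOf (MA P g.1 (f g)) = (g.1 : WithTop Ordinal) := by
      intro g
      rcases (hwit g).choose_spec with h1 | h1 <;> rw [h1] <;> rfl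
    have hinj : Function.Injective f := by
      intro g g' he
      by_contra hne
      rcases Ne.lt_or_gt (fun e : g.1 = g'.1 => hne (Subtype.ext e)) with hlt | hlt
      · have := MA_stable_up P g'.1 g'.2 g.1 (le_of_lt hlt) (f g) g.1 (hford g) le_rfl
        have h2 := hford g'
        rw [← he, this, hford g] at h2
        exact absurd (WithTop.coe_inj.1 h2) (ne_of_lt hlt)
      · have := MA_stable_up P g.1 g.2 g'.1 (le_of_lt hlt) (f g') g'.1 (hford g') le_rfl
        have h2 := hford g
        rw [he, this, hford g'] at h2
        exact absurd (WithTop.coe_inj.1 h2) (ne_of_lt hlt)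
    -- cardinality contradiction
    have hmk : Cardinal.mk Ord1 = Cardinal.lift.{1} (Cardinal.aleph 1 : Cardinal.{0}) := by
      have h0 := Ordinal.mk_Iio_ordinal (ω₁ : Ordinal.{0})
      rw [Ordinal.card_omega] at h0
      exact h0
    have h1 : Cardinal.lift.{1} (Cardinal.aleph 1 : Cardinal.{0}) ≤ Cardinal.lift.{1} (Cardinal.aleph0 : Cardinal.{0}) := by
      have hle := Cardinal.lift_mk_le'.{1, 0}.2 ⟨⟨f, hinj⟩⟩
      rw [hmk, Cardinal.mk_nat] at hle
      simpa using hle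
    exact absurd (Cardinal.lift_le.1 h1) (not_le.2 Cardinal.aleph0_lt_aleph_one)
  -- take the least element of S
  have hmem : sInf S ∈ S := csInf_mem hSne
  obtain ⟨hlt, hT, hF⟩ := hmem
  refine ⟨⟨sInf S, hlt⟩, ⟨⟨?_, ?_⟩, ?_⟩⟩
  · exact hT
  · exact hF
  · intro β hβ
    have hnot : β.1 ∉ S := fun hmem' => absurd (csInf_le' hmem') (not_le.2 hβ)
    rw [hS] at hnot
    simp only [Set.mem_setOf_eq, not_exists] at hnot
    have h2 := hnot β.2
    rw [not_and_or] at h2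
    rcases h2 with h2 | h2
    · exact Or.inl (by simpa [Mα, subtype_eta] using h2)
    · exact Or.inr (by simpa [Mα, subtype_eta] using h2)

theorem isDepth_depth (P : Program) : isDepth P (depth P) := by
  rw [depth, dif_pos (depth_exists P)]
  exact (depth_exists P).choose_spec
/-! ### the main theorem -/

theorem fixpoint_isModel (P : Program) (I : Interp) (hI : TP P I = I) : isModel P I := by
  intro c hc
  have h1 := le_TP (I := I) hc
  rw [hI] at h1
  exact h1

theorem TP_MP_eq (P : Program) : TP P (MP P) = MP P := by
  set δ : Ord1 := depth P with hδdef
  have hδ := isDepth_depth P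
  have hTlev : ∀ q, MA P δ.1 q ≠ TV.T δ := by
    intro q
    exact Set.eq_empty_iff_forall_notMem.1 hδ.1.1 q
  have hFlev : ∀ q, MA P δ.1 q ≠ TV.F δ := by
    intro q
    exact Set.eq_empty_iff_forall_notMem.1 hδ.1.2 q
  have hvalcase : ∀ q, ordOf (MA P δ.1 q) < (δ.1 : WithTop Ordinal) ∨
      MA P δ.1 q = TV.F δ.succ := by
    intro q
    rcases MA_vals P δ.1 δ.2 q with h1 | h1
    · refine Or.inl (lt_of_le_of_ne h1 ?_)
      intro he
      obtain ⟨hb, hcse⟩ := ordOf_cases he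
      rcases hcse with hcse | hcse
      · rw [subtype_eta] at hcse
        exact hFlev q hcse
      · rw [subtype_eta] at hcse
        exact hTlev q hcse
    · exact Or.inr h1
  have hMP : ∀ q, (ordOf (MA P δ.1 q) < (δ.1 : WithTop Ordinal) ∧ MP P q = MA P δ.1 q) ∨
      (MA P δ.1 q = TV.F δ.succ ∧ MP P q = TV.Z) := by
    intro q
    rcases hvalcase q with h1 | h1
    · refine Or.inl ⟨h1, ?_⟩
      show (if ordOf (MA P δ.1 q) < ((δ.1 : Ordinal) : WithTop Ordinal)
        then MA P δ.1 q else TV.Z) = MA P δ.1 q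
      rw [if_pos h1]
    · refine Or.inr ⟨h1, ?_⟩
      show (if ordOf (MA P δ.1 q) < ((δ.1 : Ordinal) : WithTop Ordinal)
        then MA P δ.1 q else TV.Z) = TV.Z
      rw [if_neg]
      show ¬ ordOf (MA P δ.1 q) < (δ.1 : WithTop Ordinal)
      rw [h1]
      refine not_lt.2 ?_
      show (δ.1 : WithTop Ordinal) ≤ ((δ.1 + 1 : Ordinal) : WithTop Ordinal)
      exact WithTop.coe_le_coe.2 (le_of_lt (olt_succ δ.1))
  have hEq : EqB (δ.succ.1) (MP P) (MA P δ.1) := by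
    intro q hq
    rcases hMP q with ⟨h1, h2⟩ | ⟨h1, h2⟩
    · exact h2
    · exfalso
      rcases hq with hq | hq
      · rw [h2, ordOf_Z] at hq
        exact absurd hq not_top_lt
      · rw [h1] at hq
        have hq' : ((δ.1 + 1 : Ordinal) : WithTop Ordinal) < ((δ.1 + 1 : Ordinal) : WithTop Ordinal) := hq
        exact absurd hq' (lt_irrefl _)
  funext p
  rcases hMP p with ⟨hord, he⟩ | ⟨hFs, he⟩
  · have h1 : TP P (MA P δ.1) p = MA P δ.1 p := G3 P δ.1 δ.2 p (Or.inr (le_of_lt hord))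
    have h2 : ordOf (TP P (MA P δ.1) p) < ((δ.succ.1 : Ordinal) : WithTop Ordinal) := by
      rw [h1]
      exact lt_trans hord (WithTop.coe_lt_coe.2 (olt_succ δ.1))
    have h3 : TP P (MP P) p = TP P (MA P δ.1) p :=
      (EqB.TP (P := P) (g := δ.succ) hEq) p (Or.inr h2)
    rw [h3, h1, he]
  · rw [he]
    have hnot : ¬ ordOf (TP P (MP P) p) < ((δ.1 + 1 : Ordinal) : WithTop Ordinal) := by
      intro hlt
      have h3 : TP P (MP P) p = TP P (MA P δ.1) p :=
        (EqB.TP (P := P) (g := δ.succ) hEq) p (Or.inl hlt)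
      have h4 : ordOf (TP P (MA P δ.1) p) < ((δ.1 + 1 : Ordinal) : WithTop Ordinal) := by
        rw [← h3]; exact hlt
      have h6 : TP P (MA P δ.1) p = MA P δ.1 p := G3 P δ.1 δ.2 p (Or.inl (wt_lt_succ.1 h4))
      rw [h6, hFs] at h4
      have h7 : ((δ.1 + 1 : Ordinal) : WithTop Ordinal) < ((δ.1 + 1 : Ordinal) : WithTop Ordinal) := h4
      exact absurd h7 (lt_irrefl _)
    have hlit : ∀ l, ordOf (evalLit (MP P) l) ≤ (δ.1 : WithTop Ordinal) ∨
        evalLit (MP P) l = TV.Z := by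
      intro l
      cases l with
      | pos q =>
        rcases hMP q with ⟨h1, h2⟩ | ⟨h1, h2⟩
        · refine Or.inl ?_
          show ordOf (MP P q) ≤ (δ.1 : WithTop Ordinal)
          rw [h2]
          exact le_of_lt h1
        · refine Or.inr ?_
          show MP P q = TV.Z
          exact h2
      | neg q =>
        rcases hMP q with ⟨h1, h2⟩ | ⟨h1, h2⟩
        · obtain ⟨b, hb, hbδ, hcse⟩ := ordOf_lt_cases h1
          refine Or.inl ?_
          show ordOf (negv (MP P q)) ≤ (δ.1 : WithTop Ordinal)
          rw [h2]
          have hble : b + 1 ≤ δ.1 := Order.add_one_le_of_lt hbδ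
          rcases hcse with hcse | hcse <;> rw [hcse]
          · rw [negv_F]
            show ((b + 1 : Ordinal) : WithTop Ordinal) ≤ (δ.1 : WithTop Ordinal)
            exact WithTop.coe_le_coe.2 hble
          · rw [negv_T]
            show ((b + 1 : Ordinal) : WithTop Ordinal) ≤ (δ.1 : WithTop Ordinal)
            exact WithTop.coe_le_coe.2 hble
        · refine Or.inr ?_
          show negv (MP P q) = TV.Z
          rw [h2, negv_Z]
      | tt =>
        refine Or.inl ?_
        show ((0 : Ordinal) : WithTop Ordinal) ≤ (δ.1 : WithTop Ordinal)
        exact WithTop.coe_le_coe.2 zero_le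
      | ff =>
        refine Or.inl ?_
        show ((0 : Ordinal) : WithTop Ordinal) ≤ (δ.1 : WithTop Ordinal)
        exact WithTop.coe_le_coe.2 zero_le
    have hrange : ∀ c ∈ P, c.head = p →
        (ordOf (evalBody (MP P) c.body) ≤ (δ.1 : WithTop Ordinal) ∨
         evalBody (MP P) c.body = TV.Z) := by
      intro c hc hh
      rcases evalBody_mem (I := MP P) (b := c.body) with h1 | ⟨l, _, h1⟩
      · rw [h1]
        refine Or.inl ?_
        show ((0 : Ordinal) : WithTop Ordinal) ≤ (δ.1 : WithTop Ordinal)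
        exact WithTop.coe_le_coe.2 zero_le
      · rw [h1]
        exact hlit l
    rcases TV.cases (TP P (MP P) p) with ⟨a, ha⟩ | ha | ⟨a, ha⟩
    · exfalso
      apply hnot
      have hub : ∀ c ∈ P, c.head = p → evalBody (MP P) c.body ≤ TV.F δ := by
        intro c hc hh
        have hle : evalBody (MP P) c.body ≤ TV.F a := by
          have h2 := le_TP (I := MP P) hc
          rw [hh, ha] at h2
          exact h2
        rcases TV.cases (evalBody (MP P) c.body) with ⟨a', ha'⟩ | ha' | ⟨a', ha'⟩
        · rcases hrange c hc hh with h2 | h2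
          · rw [ha'] at h2 ⊢
            rw [ordOf_F] at h2
            refine F_le_F.2 ?_
            exact Subtype.coe_le_coe.1 (WithTop.coe_le_coe.1 h2)
          · rw [ha'] at h2
            exact absurd h2 F_ne_Z
        · rw [ha'] at hle
          exact absurd hle (not_le.2 F_lt_Z)
        · rw [ha'] at hle
          exact absurd hle (not_le.2 F_lt_T)
      have h3 : TP P (MP P) p ≤ TV.F δ := TP_le hub
      rw [ha] at h3 ⊢
      have h4 : a ≤ δ := F_le_F.1 h3
      have h5 : ordOf (TV.F a) ≤ (δ.1 : WithTop Ordinal) := by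
        rw [ordOf_F]
        exact WithTop.coe_le_coe.2 h4
      exact lt_of_le_of_lt h5 (WithTop.coe_lt_coe.2 (olt_succ δ.1))
    · exact ha
    · exfalso
      apply hnot
      obtain ⟨c, hc, hh, hbody⟩ := TP_eq_T ha
      rcases hrange c hc hh with h2 | h2
      · rw [hbody] at h2
        rw [ha, ordOf_T]
        exact lt_of_le_of_lt h2 (WithTop.coe_lt_coe.2 (olt_succ δ.1))
      · rw [hbody] at h2
        exact absurd h2 T_ne_Z

/-- `M_P` is a fixpoint of `T_P`, every fixpoint of `T_P` is a model of `P`,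
and in particular `M_P` is a model of `P`. -/
theorem MP_fixpoint_and_model (P : Program) :
    TP P (MP P) = MP P ∧ (∀ I : Interp, TP P I = I → isModel P I) ∧ isModel P (MP P) := by
  refine ⟨TP_MP_eq P, fun I hI => fixpoint_isModel P I hI,
    fixpoint_isModel P (MP P) (TP_MP_eq P)⟩

end IVS
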